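/- arXiv:math/0406394 — 7 statements merged into one kernel-verified Lean document; each statement's English description precedes it below -/
import Mathlib

section
/- For every integer k ≥ 3 there exist k²−1 points in the closed unit square [0,1]² whose pairwise distances are all at least 1/(k − 3 + √(2 + √3)). -/
noncomputable section Stmt0Aux

namespace Stmt0Aux

/-- cos 15° -/
def cc : ℝ := Real.sqrt (2 + Real.sqrt 3) / 2
/-- sin 15° -/
def ss : ℝ := Real.sqrt (2 - Real.sqrt 3) / 2

lemma sqrt3_nonneg : (0:ℝ) ≤ Real.sqrt 3 := Real.sqrt_nonneg 3
lemma sqrt3_le_two : Real.sqrt 3 ≤ 2 := by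
  nlinarith [Real.sq_sqrt (by norm_num : (3:ℝ) ≥ 0), Real.sqrt_nonneg 3]
lemma one_le_sqrt3 : (1:ℝ) ≤ Real.sqrt 3 := by
  nlinarith [Real.sq_sqrt (by norm_num : (3:ℝ) ≥ 0), Real.sqrt_nonneg 3]

lemma cc_nonneg : 0 ≤ cc := by unfold cc; positivity
lemma ss_nonneg : 0 ≤ ss := by unfold ss; positivity

lemma cc_sq : cc ^ 2 = (2 + Real.sqrt 3) / 4 := by
  unfold cc
  rw [div_pow, Real.sq_sqrt (by nlinarith [sqrt3_nonneg])]
  norm_num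

lemma ss_sq : ss ^ 2 = (2 - Real.sqrt 3) / 4 := by
  unfold ss
  rw [div_pow, Real.sq_sqrt (by nlinarith [sqrt3_le_two])]
  norm_num

lemma cs_sq : cc ^ 2 + ss ^ 2 = 1 := by rw [cc_sq, ss_sq]; ring

lemma cc_mul_ss : cc * ss = 1 / 4 := by
  unfold cc ss
  rw [div_mul_div_comm, ← Real.sqrt_mul (by nlinarith [sqrt3_nonneg])]
  have : (2 + Real.sqrt 3) * (2 - Real.sqrt 3) = 1 := by
    nlinarith [Real.sq_sqrt (by norm_num : (3:ℝ) ≥ 0)]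
  rw [this, Real.sqrt_one]; norm_num

lemma half_le_cc : 1 / 2 ≤ cc := by
  nlinarith [cc_sq, cc_nonneg, one_le_sqrt3]

lemma ss_le_half : ss ≤ 1 / 2 := by
  nlinarith [ss_sq, ss_nonneg, one_le_sqrt3]

lemma cms_sq : (cc - ss) ^ 2 = 1 / 2 := by
  have := cs_sq; have := cc_mul_ss; nlinarith

lemma ss_le_cc : ss ≤ cc := le_trans ss_le_half half_le_cc

lemma one_le_two_cms : 1 ≤ 2 * (cc - ss) := by
  nlinarith [cms_sq, ss_le_cc]

/-- grid coordinates (in units where min distance is 1) -/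
def XX : ℕ → ℝ
  | 0 => 0
  | (t+1) => 2 * cc + t

/-- shifted row/column coordinates -/
def SS : ℕ → ℝ
  | 0 => ss
  | (t+1) => 2 * cc - ss + t

lemma helper_abs {x y r : ℝ} (h : r ≤ y - x) : r ≤ |x - y| := by
  rw [abs_sub_comm]; exact h.trans (le_abs_self _)

lemma helper_abs' {x y r : ℝ} (h : r ≤ x - y) : r ≤ |x - y| :=
  h.trans (le_abs_self _)

lemma nat_cast_sep {a b : ℕ} (h : a ≠ b) : 1 ≤ |(a:ℝ) - b| := by
  rcases lt_or_gt_of_ne h with h' | h'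
  · apply helper_abs
    have : (a:ℝ) + 1 ≤ b := by exact_mod_cast h'
    linarith
  · apply helper_abs'
    have : (b:ℝ) + 1 ≤ a := by exact_mod_cast h'
    linarith

lemma XX_sep {a b : ℕ} (h : a ≠ b) : 1 ≤ |XX a - XX b| := by
  match a, b with
  | 0, 0 => exact absurd rfl h
  | 0, (t+1) =>
      apply helper_abs
      have : (0:ℝ) ≤ (t:ℝ) := Nat.cast_nonneg t
      simp only [XX]; linarith [half_le_cc]
  | (t+1), 0 =>
      apply helper_abs'
      have : (0:ℝ) ≤ (t:ℝ) := Nat.cast_nonneg t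
      simp only [XX]; linarith [half_le_cc]
  | (a+1), (b+1) =>
      have hab : a ≠ b := by omega
      have := nat_cast_sep hab
      simp only [XX]
      have e : 2 * cc + (a:ℝ) - (2 * cc + b) = (a:ℝ) - b := by ring
      rw [e]; exact this

lemma SS_sep {a b : ℕ} (h : a ≠ b) : 1 ≤ |SS a - SS b| := by
  match a, b with
  | 0, 0 => exact absurd rfl h
  | 0, (t+1) =>
      apply helper_abs
      have : (0:ℝ) ≤ (t:ℝ) := Nat.cast_nonneg t
      simp only [SS]; linarith [one_le_two_cms]
  | (t+1), 0 =>
      apply helper_abs'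
      have : (0:ℝ) ≤ (t:ℝ) := Nat.cast_nonneg t
      simp only [SS]; linarith [one_le_two_cms]
  | (a+1), (b+1) =>
      have hab : a ≠ b := by omega
      have := nat_cast_sep hab
      simp only [SS]
      have e : 2 * cc - ss + (a:ℝ) - (2 * cc - ss + b) = (a:ℝ) - b := by ring
      rw [e]; exact this

lemma XX_vs_SS (a i : ℕ) : ss ≤ |XX a - SS i| := by
  match a, i with
  | 0, 0 =>
      apply helper_abs; simp only [XX, SS]; linarith [ss_nonneg]
  | 0, (t+1) =>
      apply helper_abs
      have : (0:ℝ) ≤ (t:ℝ) := Nat.cast_nonneg t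
      simp only [XX, SS]; linarith [one_le_two_cms, ss_le_half]
  | (t+1), 0 =>
      apply helper_abs'
      have : (0:ℝ) ≤ (t:ℝ) := Nat.cast_nonneg t
      simp only [XX, SS]; linarith [one_le_two_cms, ss_le_half]
  | (a+1), (i+1) =>
      simp only [XX, SS]
      have e : 2 * cc + (a:ℝ) - (2 * cc - ss + i) = (a:ℝ) - i + ss := by ring
      rw [e]
      rcases le_or_gt (i:ℝ) (a:ℝ) with h' | h'
      · exact le_trans (by linarith) (le_abs_self _)
      · have hai : (a:ℝ) + 1 ≤ i := by exact_mod_cast (by exact_mod_cast h' : a < i)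
        exact le_trans (by linarith [ss_le_half]) (neg_le_abs _)

lemma XX_vs_cc (a : ℕ) : cc ≤ |XX a - cc| := by
  match a with
  | 0 => apply helper_abs; simp only [XX]; linarith
  | (t+1) =>
      apply helper_abs'
      have : (0:ℝ) ≤ (t:ℝ) := Nat.cast_nonneg t
      simp only [XX]; linarith

lemma SS_vs_cc (i : ℕ) : cc - ss ≤ |SS i - cc| := by
  match i with
  | 0 => apply helper_abs; simp only [SS]; linarith
  | (t+1) =>
      apply helper_abs'
      have : (0:ℝ) ≤ (t:ℝ) := Nat.cast_nonneg t
      simp only [SS]; linarith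

lemma sq_ge_of_abs_ge {r x : ℝ} (hr : 0 ≤ r) (h : r ≤ |x|) : r ^ 2 ≤ x ^ 2 := by
  nlinarith [sq_abs x, abs_nonneg x]

/-- the point configuration, in units where the required min distance is 1 -/
def pt {K : ℕ} : (Fin K × Fin K) ⊕ (Fin K ⊕ Fin K) → ℝ × ℝ
  | .inl ab => (XX ab.1, XX ab.2)
  | .inr (.inl i) => (cc, SS i)
  | .inr (.inr j) => (SS j, cc)

lemma core {K : ℕ} (p q : (Fin K × Fin K) ⊕ (Fin K ⊕ Fin K)) (hpq : p ≠ q) :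
    1 ≤ ((pt p).1 - (pt q).1) ^ 2 + ((pt p).2 - (pt q).2) ^ 2 := by
  have h1 := cs_sq
  have h2 := cms_sq
  rcases p with ⟨a, b⟩ | (i | j) <;> rcases q with ⟨a', b'⟩ | (i' | j') <;>
      simp only [pt]
  · -- grid vs grid
    rcases eq_or_ne a a' with ha | ha
    · have hb : (b : ℕ) ≠ b' := by
        intro hb
        exact hpq (by simp [Prod.ext_iff, ha, Fin.val_injective hb])
      have := sq_ge_of_abs_ge (by norm_num) (XX_sep hb)
      nlinarith [sq_nonneg (XX (a:ℕ) - XX (a':ℕ))]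
    · have ha' : (a : ℕ) ≠ a' := fun h => ha (Fin.val_injective h)
      have := sq_ge_of_abs_ge (by norm_num) (XX_sep ha')
      nlinarith [sq_nonneg (XX (b:ℕ) - XX (b':ℕ))]
  · -- grid vs column
    have hx := sq_ge_of_abs_ge cc_nonneg (XX_vs_cc a)
    have hy := sq_ge_of_abs_ge ss_nonneg (XX_vs_SS b i')
    nlinarith
  · -- grid vs row
    have hx := sq_ge_of_abs_ge ss_nonneg (XX_vs_SS a j')
    have hy := sq_ge_of_abs_ge cc_nonneg (XX_vs_cc b)
    nlinarith
  · -- column vs grid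
    have hx := sq_ge_of_abs_ge cc_nonneg (XX_vs_cc a')
    have hy := sq_ge_of_abs_ge ss_nonneg (XX_vs_SS b' i)
    nlinarith
  · -- column vs column
    have hi : (i : ℕ) ≠ i' := by
      intro h; exact hpq (by simp [Fin.val_injective h])
    have := sq_ge_of_abs_ge (by norm_num) (SS_sep hi)
    nlinarith [sq_nonneg (cc - cc)]
  · -- column vs row
    have hx := sq_ge_of_abs_ge (by linarith [ss_le_cc] : (0:ℝ) ≤ cc - ss)
      (by rw [abs_sub_comm]; exact SS_vs_cc j')
    have hy := sq_ge_of_abs_ge (by linarith [ss_le_cc] : (0:ℝ) ≤ cc - ss)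
      (SS_vs_cc i)
    nlinarith
  · -- row vs grid
    have hx := sq_ge_of_abs_ge ss_nonneg (XX_vs_SS a' j)
    have hy := sq_ge_of_abs_ge cc_nonneg (XX_vs_cc b')
    nlinarith
  · -- row vs column
    have hx := sq_ge_of_abs_ge (by linarith [ss_le_cc] : (0:ℝ) ≤ cc - ss)
      (SS_vs_cc j)
    have hy := sq_ge_of_abs_ge (by linarith [ss_le_cc] : (0:ℝ) ≤ cc - ss)
      (by rw [abs_sub_comm]; exact SS_vs_cc i')
    nlinarith
  · -- row vs row
    have hj : (j : ℕ) ≠ j' := by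
      intro h; exact hpq (by simp [Fin.val_injective h])
    have := sq_ge_of_abs_ge (by norm_num) (SS_sep hj)
    nlinarith [sq_nonneg (cc - cc)]

/-- side length of scaled square -/
def HH (k : ℕ) : ℝ := (k : ℝ) - 3 + 2 * cc

lemma HH_pos {k : ℕ} (hk : 3 ≤ k) : 0 < HH k := by
  have : (3:ℝ) ≤ (k:ℝ) := by exact_mod_cast hk
  unfold HH; linarith [half_le_cc]

lemma XX_mem {k t : ℕ} (hk : 3 ≤ k) (ht : t ≤ k - 2) : 0 ≤ XX t ∧ XX t ≤ HH k := by
  have h3 : (3:ℝ) ≤ (k:ℝ) := by exact_mod_cast hk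
  match t with
  | 0 =>
      constructor
      · simp [XX]
      · simp only [XX]; linarith [HH_pos hk]
  | (t+1) =>
      have htk : (t:ℝ) ≤ (k:ℝ) - 3 := by
        have : t + 3 ≤ k := by omega
        have : ((t:ℝ) + 3) ≤ (k:ℝ) := by exact_mod_cast this
        linarith
      constructor
      · simp only [XX]
        have h0 : (0:ℝ) ≤ (t:ℝ) := Nat.cast_nonneg t
        linarith [half_le_cc]
      · simp only [XX, HH]; linarith

lemma SS_mem {k t : ℕ} (hk : 3 ≤ k) (ht : t ≤ k - 2) : 0 ≤ SS t ∧ SS t ≤ HH k := by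
  have h3 : (3:ℝ) ≤ (k:ℝ) := by exact_mod_cast hk
  match t with
  | 0 =>
      refine ⟨ss_nonneg, ?_⟩
      simp only [SS, HH]; linarith [ss_le_half, half_le_cc]
  | (t+1) =>
      have htk : (t:ℝ) ≤ (k:ℝ) - 3 := by
        have : t + 3 ≤ k := by omega
        have : ((t:ℝ) + 3) ≤ (k:ℝ) := by exact_mod_cast this
        linarith
      constructor
      · simp only [SS]
        have : (0:ℝ) ≤ (t:ℝ) := Nat.cast_nonneg t
        linarith [one_le_two_cms, ss_nonneg]
      · simp only [SS, HH]; linarith [ss_nonneg]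

lemma cc_mem {k : ℕ} (hk : 3 ≤ k) : 0 ≤ cc ∧ cc ≤ HH k := by
  have h3 : (3:ℝ) ≤ (k:ℝ) := by exact_mod_cast hk
  exact ⟨cc_nonneg, by unfold HH; linarith [cc_nonneg]⟩

lemma pt_mem {k K : ℕ} (hk : 3 ≤ k) (hK : K = k - 1)
    (p : (Fin K × Fin K) ⊕ (Fin K ⊕ Fin K)) :
    (0 ≤ (pt p).1 ∧ (pt p).1 ≤ HH k) ∧ (0 ≤ (pt p).2 ∧ (pt p).2 ≤ HH k) := by
  rcases p with ⟨a, b⟩ | (i | j)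
  · exact ⟨XX_mem hk (by have := a.isLt; omega),
      XX_mem hk (by have := b.isLt; omega)⟩
  · exact ⟨cc_mem hk, SS_mem hk (by have := i.isLt; omega)⟩
  · exact ⟨SS_mem hk (by have := j.isLt; omega), cc_mem hk⟩

end Stmt0Aux

end Stmt0Aux

open Stmt0Aux in
/-- For every integer `k ≥ 3` there exist `k² - 1` points in the closed unit square
whose pairwise distances are all at least `1 / (k - 3 + √(2 + √3))`. -/
theorem stmt_0 (k : ℕ) (hk : 3 ≤ k) :
    ∃ f : Fin (k ^ 2 - 1) → EuclideanSpace ℝ (Fin 2),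
      (∀ i t, f i t ∈ Set.Icc (0 : ℝ) 1) ∧
      ∀ i j, i ≠ j →
        1 / ((k : ℝ) - 3 + Real.sqrt (2 + Real.sqrt 3)) ≤ dist (f i) (f j) := by
  have hden : (k : ℝ) - 3 + Real.sqrt (2 + Real.sqrt 3) = HH k := by
    unfold HH cc; ring
  set K := k - 1 with hKdef
  have hcard : K * K + (K + K) = k ^ 2 - 1 := by
    have h1 : k = K + 1 := by omega
    have h3 : k ^ 2 = K * K + (K + K) + 1 := by rw [h1]; ring
    omega
  let E : ((Fin K × Fin K) ⊕ (Fin K ⊕ Fin K)) ≃ Fin (k ^ 2 - 1) :=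
    ((Equiv.sumCongr finProdFinEquiv finSumFinEquiv).trans finSumFinEquiv).trans
      (finCongr hcard)
  have hH := HH_pos hk
  refine ⟨fun i => (WithLp.toLp 2 (fun t : Fin 2 =>
      (if t = 0 then (pt (E.symm i)).1 else (pt (E.symm i)).2) / HH k) :
      EuclideanSpace ℝ (Fin 2)), ?_, ?_⟩
  · intro i t
    have hm := pt_mem hk rfl (E.symm i)
    dsimp only
    rw [Set.mem_Icc]
    rcases eq_or_ne t 0 with h | h
    · rw [if_pos h]
      exact ⟨div_nonneg hm.1.1 hH.le, by rw [div_le_one hH]; exact hm.1.2⟩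
    · rw [if_neg h]
      exact ⟨div_nonneg hm.2.1 hH.le, by rw [div_le_one hH]; exact hm.2.2⟩
  · intro i j hij
    rw [hden]
    have hpq : E.symm i ≠ E.symm j := fun h => hij (by
      have := congrArg E h; simpa using this)
    have hcore := core (E.symm i) (E.symm j) hpq
    set P := E.symm i
    set Q := E.symm j
    rw [EuclideanSpace.dist_eq, Fin.sum_univ_two]
    have c0 : ((0 : Fin 2) = 0) = True := by simp
    have c1 : ((1 : Fin 2) = 0) = False := by simp
    simp only [c0, c1, if_true, if_false]
    rw [Real.dist_eq, Real.dist_eq]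
    rw [Real.le_sqrt (by positivity) (by positivity)]
    have e1 : |(pt P).1 / HH k - (pt Q).1 / HH k| ^ 2
        = ((pt P).1 - (pt Q).1) ^ 2 / HH k ^ 2 := by
      rw [sq_abs]; field_simp
    have e2 : |(pt P).2 / HH k - (pt Q).2 / HH k| ^ 2
        = ((pt P).2 - (pt Q).2) ^ 2 / HH k ^ 2 := by
      rw [sq_abs]; field_simp
    rw [e1, e2, ← add_div, div_pow, one_pow]
    gcongr
end

section
/- For every integer k ≥ 5 there exist k²−2 points in the closed unit square [0,1]² whose pairwise distances are all at least 1/(k − 5 + 2√(2 + √3)). -/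
namespace St2
noncomputable def C : ℝ := Real.sqrt (2 + Real.sqrt 3)
noncomputable def D : ℝ := Real.sqrt (2 - Real.sqrt 3)

lemma s3 : Real.sqrt 3 ^ 2 = 3 := Real.sq_sqrt (by norm_num)
lemma s3lb : (1.7:ℝ) < Real.sqrt 3 := by nlinarith [s3, Real.sqrt_nonneg 3]
lemma s3ub : Real.sqrt 3 < 1.8 := by nlinarith [s3, Real.sqrt_nonneg 3]
lemma hC2 : C ^ 2 = 2 + Real.sqrt 3 := Real.sq_sqrt (by positivity)
lemma hD2 : D ^ 2 = 2 - Real.sqrt 3 := Real.sq_sqrt (by nlinarith [s3ub])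
lemma hC0 : 0 ≤ C := Real.sqrt_nonneg _
lemma hD0 : 0 ≤ D := Real.sqrt_nonneg _
lemma hClb : (1.9:ℝ) < C := by nlinarith [hC2, hC0, s3lb]
lemma hCub : C < 2 := by nlinarith [hC2, hC0, s3ub]
lemma hDlb : (0.4:ℝ) < D := by nlinarith [hD2, hD0, s3ub]
lemma hDub : D < 0.6 := by nlinarith [hD2, hD0, s3lb]
lemma hCD : C * D = 1 := by
  rw [C, D, ← Real.sqrt_mul (by positivity)]
  have : (2 + Real.sqrt 3) * (2 - Real.sqrt 3) = 1 := by nlinarith [s3]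
  rw [this, Real.sqrt_one]

noncomputable def LL (k : ℕ) : ℝ := (k:ℝ) - 5 + 2*C
noncomputable def q (k i : ℕ) : ℝ := if i = 0 then 0 else if i ≤ k - 4 then C + i - 1 else LL k
noncomputable def bx (k i : ℕ) : ℝ := if i ≤ k - 4 then q k i + D/2 else LL k - D/2

variable {k : ℕ}

lemma hk5 (hk : 5 ≤ k) : (5:ℝ) ≤ (k:ℝ) := by exact_mod_cast hk
lemma LL_big (hk : 5 ≤ k) : (3.8:ℝ) ≤ LL k := by
  have := hk5 hk; unfold LL; nlinarith [hClb]

lemma cast_le_k4 (hk : 5 ≤ k) {i : ℕ} (hi : i ≤ k - 4) : (i:ℝ) ≤ (k:ℝ) - 4 := by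
  have h : i + 4 ≤ k := by omega
  have : (i:ℝ) + 4 ≤ (k:ℝ) := by exact_mod_cast h
  linarith

lemma q0 : q k 0 = 0 := by simp [q]
lemma q1 (hk : 5 ≤ k) : q k 1 = C := by
  have h1 : 1 ≤ k - 4 := by omega
  simp [q, h1]
lemma qlast (hk : 5 ≤ k) : q k (k-3) = LL k := by
  have h0 : ¬ (k - 3 = 0) := by omega
  have h1 : ¬ (k - 3 ≤ k - 4) := by omega
  simp [q, h0, h1]

lemma q_nonneg (hk : 5 ≤ k) (i : ℕ) : 0 ≤ q k i := by
  have := hk5 hk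
  unfold q
  split_ifs with h0 h1
  · exact le_refl 0
  · have : (1:ℝ) ≤ (i:ℝ) := by exact_mod_cast Nat.one_le_iff_ne_zero.mpr h0
    nlinarith [hClb]
  · unfold LL; nlinarith [hClb]

lemma q_le (hk : 5 ≤ k) {i : ℕ} (hi : i ≤ k - 3) : q k i ≤ LL k := by
  have := hk5 hk
  unfold q
  split_ifs with h0 h1
  · unfold LL; nlinarith [hClb]
  · have := cast_le_k4 hk h1
    unfold LL; nlinarith [hClb]
  · exact le_refl _

lemma q_mono (hk : 5 ≤ k) {i j : ℕ} (hij : i < j) (hj : j ≤ k - 3) : q k i + 1 ≤ q k j := by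
  have hk5' := hk5 hk
  unfold q
  have hj0 : ¬ (j = 0) := by omega
  rw [if_neg hj0]
  split_ifs with h0 h1 h2
  · have : (1:ℝ) ≤ (j:ℝ) := by exact_mod_cast (by omega : 1 ≤ j)
    nlinarith [hClb]
  · unfold LL; nlinarith [hClb]
  · have : (i:ℝ) + 1 ≤ (j:ℝ) := by exact_mod_cast hij
    linarith
  · have := cast_le_k4 hk h2
    unfold LL; nlinarith [hClb]
  · omega
  · omega

lemma q_sep (hk : 5 ≤ k) {i j : ℕ} (hij : i ≠ j) (hi : i ≤ k - 3) (hj : j ≤ k - 3) :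
    1 ≤ |q k i - q k j| := by
  rcases Nat.lt_or_ge i j with h | h
  · rw [abs_sub_comm, le_abs]; left; linarith [q_mono hk h hj]
  · have h' : j < i := by omega
    rw [le_abs]; left; linarith [q_mono hk h' hi]


lemma q_ge2 (hk : 5 ≤ k) {i : ℕ} (hi : 2 ≤ i) : C + 1 ≤ q k i := by
  have hk5' := hk5 hk
  unfold q
  split_ifs with h0 h1
  · omega
  · have : (2:ℝ) ≤ (i:ℝ) := by exact_mod_cast hi
    linarith
  · unfold LL; nlinarith [hClb]

lemma q_le_sub (hk : 5 ≤ k) {i : ℕ} (hi : i ≤ k - 4) : q k i ≤ LL k - C := by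
  have hk5' := hk5 hk
  have hc := cast_le_k4 hk hi
  unfold q
  split_ifs
  all_goals unfold LL
  all_goals nlinarith [hClb]

lemma q_le5 (hk : 5 ≤ k) {i : ℕ} (hi : i ≤ k - 5) : q k i ≤ LL k - C - 1 := by
  have hk5' := hk5 hk
  unfold q
  split_ifs with h0 h1
  · unfold LL; nlinarith [hClb]
  · have h : i + 5 ≤ k := by omega
    have : (i:ℝ) + 5 ≤ (k:ℝ) := by exact_mod_cast h
    unfold LL; nlinarith [hClb]
  · omega

lemma q_refl (hk : 5 ≤ k) {i : ℕ} (hi : i ≤ k - 3) : LL k - q k i = q k (k - 3 - i) := by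
  rcases Nat.eq_zero_or_pos i with h0 | h0
  · subst h0; rw [q0]; simp; rw [qlast hk]
  · rcases Nat.eq_or_lt_of_le hi with h1 | h1
    · rw [h1, qlast hk]
      have : k - 3 - (k - 3) = 0 := by omega
      rw [this, q0]; ring
    · -- 1 ≤ i ≤ k - 4
      have hi4 : i ≤ k - 4 := by omega
      have hj : 1 ≤ k - 3 - i ∧ k - 3 - i ≤ k - 4 := by omega
      have e1 : q k i = C + i - 1 := by
        unfold q; rw [if_neg (by omega), if_pos hi4]
      have e2 : q k (k - 3 - i) = C + (k - 3 - i : ℕ) - 1 := by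
        unfold q; rw [if_neg (by omega), if_pos hj.2]
      have e3 : ((k - 3 - i : ℕ) : ℝ) = (k:ℝ) - 3 - i := by
        rw [Nat.cast_sub (by omega), Nat.cast_sub (by omega)]
        push_cast; ring
      rw [e1, e2, e3]
      unfold LL; ring

lemma bx0 (hk : 5 ≤ k) : bx k 0 = D/2 := by
  unfold bx; rw [if_pos (by omega : 0 ≤ k - 4), q0]; ring

lemma bxlast (hk : 5 ≤ k) : bx k (k-3) = LL k - D/2 := by
  unfold bx; rw [if_neg (by omega)]

lemma bx_lb (hk : 5 ≤ k) (i : ℕ) : D/2 ≤ bx k i := by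
  unfold bx
  split_ifs with h
  · nlinarith [q_nonneg hk i, hD0]
  · nlinarith [LL_big hk, hDub, hDlb]

lemma bx_ub (hk : 5 ≤ k) {i : ℕ} (hi : i ≤ k - 3) : bx k i ≤ LL k - D/2 := by
  unfold bx
  split_ifs with h
  · nlinarith [q_le_sub hk h, hDub, hDlb, hClb]
  · exact le_refl _

lemma bx_sep (hk : 5 ≤ k) {i j : ℕ} (hij : i ≠ j) (hi : i ≤ k - 3) (hj : j ≤ k - 3) :
    1 ≤ |bx k i - bx k j| := by
  have key : ∀ s t : ℕ, s < t → t ≤ k - 3 → bx k s + 1 ≤ bx k t := by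
    intro s t hst ht
    unfold bx
    split_ifs with h1 h2 h3
    · linarith [q_mono hk hst (by omega : t ≤ k - 3)]
    · have hs4 : s ≤ k - 4 := h1
      nlinarith [q_le_sub hk hs4, hClb, hDub, hDlb]
    · omega
    · omega
  rcases Nat.lt_or_ge i j with h | h
  · rw [abs_sub_comm, le_abs]; left; linarith [key i j h hj]
  · have h' : j < i := by omega
    rw [le_abs]; left; linarith [key j i h' hi]

lemma claimC (hk : 5 ≤ k) {i j : ℕ} (hi : i ≤ k - 3) (hj : j ≤ k - 3) :
    D/2 ≤ |q k i - bx k j| := by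
  have hD2' : D/2 < 0.3 := by linarith [hDub]
  by_cases h : j ≤ k - 4
  · have e : bx k j = q k j + D/2 := by unfold bx; rw [if_pos h]
    rw [e]
    rcases Nat.lt_trichotomy i j with h1 | h1 | h1
    · rw [abs_sub_comm, le_abs]; left
      linarith [q_mono hk h1 hj]
    · subst h1; rw [show q k i - (q k i + D/2) = -(D/2) by ring, abs_neg,
        abs_of_nonneg (by linarith [hD0])]
    · rw [le_abs]; left
      linarith [q_mono hk h1 hi]
  · have hj3 : j = k - 3 := by omega
    subst hj3
    rw [bxlast hk]
    rcases Nat.eq_or_lt_of_le hi with h1 | h1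
    · rw [h1, qlast hk, show LL k - (LL k - D/2) = D/2 by ring,
        abs_of_nonneg (by linarith [hD0])]
    · have hi4 : i ≤ k - 4 := by omega
      rw [abs_sub_comm, le_abs]; left
      linarith [q_le_sub hk hi4, hClb]

lemma lemW (hk : 5 ≤ k) {i : ℕ} (hi : i ≤ k - 3) : C/2 ≤ |q k i - C/2| := by
  rcases Nat.lt_or_ge i 2 with h | h
  · interval_cases i
    · rw [q0, show (0:ℝ) - C/2 = -(C/2) by ring, abs_neg,
        abs_of_nonneg (by linarith [hC0])]
    · rw [q1 hk, show C - C/2 = C/2 by ring, abs_of_nonneg (by linarith [hC0])]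
  · rw [le_abs]; left
    linarith [q_ge2 hk h]

lemma lemZ (hk : 5 ≤ k) {i : ℕ} (hi : i ≤ k - 3) : (C-D)/2 ≤ |q k i - (C+D)/2| := by
  rcases Nat.lt_or_ge i 2 with h | h
  · interval_cases i
    · rw [q0, abs_sub_comm, show (C+D)/2 - 0 = (C+D)/2 by ring,
        abs_of_nonneg (by linarith [hC0, hD0])]
      linarith [hD0]
    · rw [q1 hk, show C - (C+D)/2 = (C-D)/2 by ring,
        abs_of_nonneg (by linarith [hClb, hDub])]
  · rw [le_abs]; left
    linarith [q_ge2 hk h, hDlb, hD0]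

lemma lemX' (hk : 5 ≤ k) {i : ℕ} (hi : i ≤ k - 3) : (C-D)/2 ≤ |bx k i - C/2| := by
  rcases Nat.eq_zero_or_pos i with h0 | h0
  · subst h0; rw [bx0 hk, abs_sub_comm, show C/2 - D/2 = (C-D)/2 by ring,
      abs_of_nonneg (by linarith [hClb, hDub])]
  · rw [le_abs]; left
    have : C + D/2 ≤ bx k i := by
      unfold bx
      split_ifs with h
      · have e : q k i = C + i - 1 := by unfold q; rw [if_neg (by omega), if_pos h]
        have : (1:ℝ) ≤ (i:ℝ) := by exact_mod_cast h0
        linarith [e ▸ le_refl (q k i), (by linarith [e.ge] : C + (i:ℝ) - 1 ≤ q k i)]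
      · nlinarith [LL_big hk, hClb, hCub, hDub, hDlb]
    linarith [hDub, hDlb, hClb]

lemma lemX (hk : 5 ≤ k) {i : ℕ} (hi : i ≤ k - 3) : (C-D)/2 ≤ |bx k i - (LL k - C/2)| := by
  by_cases h1 : i ≤ k - 5
  · -- bx i = q i + D/2 ≤ LL - C - 1 + D/2
    have e : bx k i = q k i + D/2 := by unfold bx; rw [if_pos (by omega)]
    rw [abs_sub_comm, le_abs]; left
    linarith [q_le5 hk h1, hClb, hDub]
  · rcases (by omega : i = k - 4 ∨ i = k - 3) with h | h
    · subst h
      have e : bx k (k-4) = LL k - C + D/2 := by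
        unfold bx; rw [if_pos (le_refl _)]
        have e2 : q k (k-4) = C + ((k:ℕ) - 4 : ℕ) - 1 := by
          unfold q; rw [if_neg (by omega), if_pos (le_refl _)]
        rw [e2]
        have e3 : ((k - 4 : ℕ) : ℝ) = (k:ℝ) - 4 := by
          rw [Nat.cast_sub (by omega)]; push_cast; ring
        rw [e3]; unfold LL; ring
      rw [e, show LL k - C + D/2 - (LL k - C/2) = -((C-D)/2) by ring, abs_neg,
        abs_of_nonneg (by linarith [hClb, hDub])]
    · subst h
      rw [bxlast hk, show LL k - D/2 - (LL k - C/2) = (C-D)/2 by ring,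
        abs_of_nonneg (by linarith [hClb, hDub])]

lemma lemY (hk : 5 ≤ k) {i : ℕ} (hi : i ≤ k - 3) : C/2 ≤ |bx k i - (C+D)/2| := by
  rcases Nat.lt_or_ge i 2 with h | h
  · interval_cases i
    · rw [bx0 hk, abs_sub_comm, show (C+D)/2 - D/2 = C/2 by ring,
        abs_of_nonneg (by linarith [hC0])]
    · have e : bx k 1 = C + D/2 := by
        unfold bx; rw [if_pos (by omega), q1 hk]
      rw [e, show C + D/2 - (C+D)/2 = C/2 by ring,
        abs_of_nonneg (by linarith [hC0])]
  · rw [le_abs]; left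
    by_cases h4 : i ≤ k - 4
    · have e : bx k i = q k i + D/2 := by unfold bx; rw [if_pos h4]
      rw [e]
      linarith [q_ge2 hk h, hDlb, hD0, hClb]
    · rw [(by omega : i = k - 3), bxlast hk]
      nlinarith [LL_big hk, hClb, hCub, hDub, hDlb]


def good (p r : ℝ × ℝ) : Prop := 1 ≤ (p.1 - r.1)^2 + (p.2 - r.2)^2

lemma good_of_abs {x y a b : ℝ} (ha : 0 ≤ a) (hb : 0 ≤ b) (hx : a ≤ |x|) (hy : b ≤ |y|)
    (h : 1 ≤ a^2 + b^2) : 1 ≤ x^2 + y^2 := by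
  nlinarith [pow_le_pow_left₀ ha hx 2, pow_le_pow_left₀ hb hy 2, sq_abs x, sq_abs y]

lemma good_of_x {x y : ℝ} (h : 1 ≤ |x|) : 1 ≤ x^2 + y^2 := by
  nlinarith [pow_le_pow_left₀ (by norm_num : (0:ℝ) ≤ 1) h 2, sq_abs x, sq_nonneg y]

lemma good_of_y {x y : ℝ} (h : 1 ≤ |y|) : 1 ≤ x^2 + y^2 := by
  nlinarith [pow_le_pow_left₀ (by norm_num : (0:ℝ) ≤ 1) h 2, sq_abs y, sq_nonneg x]

lemma sumCD : 1 ≤ (C/2)^2 + (D/2)^2 := by nlinarith [hC2, hD2]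
lemma sumDC : 1 ≤ (D/2)^2 + (C/2)^2 := by nlinarith [hC2, hD2]
lemma sumXX : 1 ≤ ((C-D)/2)^2 + ((C-D)/2)^2 := by nlinarith [hC2, hD2, hCD]
lemma CD2pos : (0:ℝ) ≤ (C-D)/2 := by linarith [hClb, hDub]
lemma C2pos : (0:ℝ) ≤ C/2 := by linarith [hC0]
lemma D2pos : (0:ℝ) ≤ D/2 := by linarith [hD0]

variable {i j u : ℕ}

-- 2. grid vs B row
lemma gB (hk : 5 ≤ k) (hi : i ≤ k-3) (hj : j ≤ k-3) (hu : u ≤ k-3) :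
    good (q k i, q k j) (bx k u, C/2) :=
  good_of_abs D2pos C2pos (claimC hk hi hu) (lemW hk hj) sumDC

-- 3. grid vs L column
lemma gLc (hk : 5 ≤ k) (hi : i ≤ k-3) (hj : j ≤ k-3) (hu : u ≤ k-3) :
    good (q k i, q k j) (C/2, bx k u) :=
  good_of_abs C2pos D2pos (lemW hk hi) (claimC hk hj hu) sumCD

-- 4. grid vs T row
lemma gT (hk : 5 ≤ k) (hi : i ≤ k-3) (hj : j ≤ k-3) (hu : u ≤ k-3) :
    good (q k i, q k j) (LL k - bx k u, LL k - C/2) := by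
  have e1 : q k i - (LL k - bx k u) = -(q k (k-3-i) - bx k u) := by
    rw [← q_refl hk hi]; ring
  have e2 : q k j - (LL k - C/2) = -(q k (k-3-j) - C/2) := by
    rw [← q_refl hk hj]; ring
  unfold good; dsimp only
  rw [e1, e2]
  exact good_of_abs D2pos C2pos (by rw [abs_neg]; exact claimC hk (by omega) hu)
    (by rw [abs_neg]; exact lemW hk (by omega)) sumDC

-- 5. grid vs R column
lemma gR (hk : 5 ≤ k) (hi : i ≤ k-3) (hj : j ≤ k-3) (hu : u ≤ k-3) :
    good (q k i, q k j) (LL k - C/2, LL k - bx k u) := by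
  have e1 : q k i - (LL k - C/2) = -(q k (k-3-i) - C/2) := by
    rw [← q_refl hk hi]; ring
  have e2 : q k j - (LL k - bx k u) = -(q k (k-3-j) - bx k u) := by
    rw [← q_refl hk hj]; ring
  unfold good; dsimp only
  rw [e1, e2]
  exact good_of_abs C2pos D2pos (by rw [abs_neg]; exact lemW hk (by omega))
    (by rw [abs_neg]; exact claimC hk (by omega) hu) sumCD

-- 6. grid vs E1
lemma gE1 (hk : 5 ≤ k) (hi : i ≤ k-3) (hj : j ≤ k-3) :
    good (q k i, q k j) ((C+D)/2, (C+D)/2) :=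
  good_of_abs CD2pos CD2pos (lemZ hk hi) (lemZ hk hj) sumXX

-- 7. grid vs E2
lemma gE2 (hk : 5 ≤ k) (hi : i ≤ k-3) (hj : j ≤ k-3) :
    good (q k i, q k j) (LL k - (C+D)/2, LL k - (C+D)/2) := by
  have e1 : q k i - (LL k - (C+D)/2) = -(q k (k-3-i) - (C+D)/2) := by
    rw [← q_refl hk hi]; ring
  have e2 : q k j - (LL k - (C+D)/2) = -(q k (k-3-j) - (C+D)/2) := by
    rw [← q_refl hk hj]; ring
  unfold good; dsimp only
  rw [e1, e2]
  exact good_of_abs CD2pos CD2pos (by rw [abs_neg]; exact lemZ hk (by omega))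
    (by rw [abs_neg]; exact lemZ hk (by omega)) sumXX

-- 8. B vs Lc
lemma BLc (hk : 5 ≤ k) (hi : i ≤ k-3) (hj : j ≤ k-3) :
    good (bx k i, C/2) (C/2, bx k j) :=
  good_of_abs CD2pos CD2pos (lemX' hk hi) (by rw [abs_sub_comm]; exact lemX' hk hj) sumXX

-- 9. B vs T
lemma BT (hk : 5 ≤ k) (hi : i ≤ k-3) (hj : j ≤ k-3) :
    good (bx k i, C/2) (LL k - bx k j, LL k - C/2) := by
  apply good_of_y
  rw [le_abs]; right
  linarith [LL_big hk, hCub]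

-- 10. B vs R
lemma BR (hk : 5 ≤ k) (hi : i ≤ k-3) (hj : j ≤ k-3) :
    good (bx k i, C/2) (LL k - C/2, LL k - bx k j) := by
  unfold good; dsimp only
  rw [show C/2 - (LL k - bx k j) = bx k j - (LL k - C/2) by ring]
  exact good_of_abs CD2pos CD2pos (lemX hk hi) (lemX hk hj) sumXX

-- 11. B vs E1
lemma BE1 (hk : 5 ≤ k) (hi : i ≤ k-3) :
    good (bx k i, C/2) ((C+D)/2, (C+D)/2) := by
  unfold good; dsimp only
  rw [show C/2 - (C+D)/2 = -(D/2) by ring]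
  exact good_of_abs C2pos D2pos (lemY hk hi)
    (by rw [abs_neg, abs_of_nonneg D2pos]) sumCD

-- 12. B vs E2
lemma BE2 (hk : 5 ≤ k) (hi : i ≤ k-3) :
    good (bx k i, C/2) (LL k - (C+D)/2, LL k - (C+D)/2) := by
  apply good_of_y
  rw [le_abs]; right
  linarith [LL_big hk, hCub, hDub]

-- 13. Lc vs T
lemma LcT (hk : 5 ≤ k) (hi : i ≤ k-3) (hj : j ≤ k-3) :
    good (C/2, bx k i) (LL k - bx k j, LL k - C/2) := by
  unfold good; dsimp only
  rw [show C/2 - (LL k - bx k j) = bx k j - (LL k - C/2) by ring]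
  exact good_of_abs CD2pos CD2pos (lemX hk hj) (lemX hk hi) sumXX

-- 14. Lc vs R
lemma LcR (hk : 5 ≤ k) (hi : i ≤ k-3) (hj : j ≤ k-3) :
    good (C/2, bx k i) (LL k - C/2, LL k - bx k j) := by
  apply good_of_x
  rw [le_abs]; right
  linarith [LL_big hk, hCub]

-- 15. Lc vs E1
lemma LcE1 (hk : 5 ≤ k) (hi : i ≤ k-3) :
    good (C/2, bx k i) ((C+D)/2, (C+D)/2) := by
  unfold good; dsimp only
  rw [show C/2 - (C+D)/2 = -(D/2) by ring]
  exact good_of_abs D2pos C2pos (by rw [abs_neg, abs_of_nonneg D2pos]) (lemY hk hi) sumDC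

-- 16. Lc vs E2
lemma LcE2 (hk : 5 ≤ k) (hi : i ≤ k-3) :
    good (C/2, bx k i) (LL k - (C+D)/2, LL k - (C+D)/2) := by
  apply good_of_x
  rw [le_abs]; right
  linarith [LL_big hk, hCub, hDub]

-- 17. T vs R
lemma TR (hk : 5 ≤ k) (hi : i ≤ k-3) (hj : j ≤ k-3) :
    good (LL k - bx k i, LL k - C/2) (LL k - C/2, LL k - bx k j) := by
  unfold good; dsimp only
  rw [show LL k - bx k i - (LL k - C/2) = -(bx k i - C/2) by ring,
      show LL k - C/2 - (LL k - bx k j) = bx k j - C/2 by ring]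
  exact good_of_abs CD2pos CD2pos (by rw [abs_neg]; exact lemX' hk hi) (lemX' hk hj) sumXX

-- 18. T vs E1
lemma TE1 (hk : 5 ≤ k) (hi : i ≤ k-3) :
    good (LL k - bx k i, LL k - C/2) ((C+D)/2, (C+D)/2) := by
  apply good_of_y
  rw [le_abs]; left
  linarith [LL_big hk, hCub, hDub]

-- 19. T vs E2
lemma TE2 (hk : 5 ≤ k) (hi : i ≤ k-3) :
    good (LL k - bx k i, LL k - C/2) (LL k - (C+D)/2, LL k - (C+D)/2) := by
  unfold good; dsimp only
  rw [show LL k - bx k i - (LL k - (C+D)/2) = -(bx k i - (C+D)/2) by ring,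
      show LL k - C/2 - (LL k - (C+D)/2) = D/2 by ring]
  exact good_of_abs C2pos D2pos (by rw [abs_neg]; exact lemY hk hi)
    (by rw [abs_of_nonneg D2pos]) sumCD

-- 20. R vs E1
lemma RE1 (hk : 5 ≤ k) (hi : i ≤ k-3) :
    good (LL k - C/2, LL k - bx k i) ((C+D)/2, (C+D)/2) := by
  apply good_of_x
  rw [le_abs]; left
  linarith [LL_big hk, hCub, hDub]

-- 21. R vs E2
lemma RE2 (hk : 5 ≤ k) (hi : i ≤ k-3) :
    good (LL k - C/2, LL k - bx k i) (LL k - (C+D)/2, LL k - (C+D)/2) := by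
  unfold good; dsimp only
  rw [show LL k - C/2 - (LL k - (C+D)/2) = D/2 by ring,
      show LL k - bx k i - (LL k - (C+D)/2) = -(bx k i - (C+D)/2) by ring]
  exact good_of_abs D2pos C2pos (by rw [abs_of_nonneg D2pos])
    (by rw [abs_neg]; exact lemY hk hi) sumDC

-- 22. E1 vs E2
lemma E1E2 (hk : 5 ≤ k) :
    good ((C+D)/2, (C+D)/2) (LL k - (C+D)/2, LL k - (C+D)/2) := by
  apply good_of_x
  rw [le_abs]; right
  linarith [LL_big hk, hCub, hDub]


noncomputable def gridL (k : ℕ) : List (ℝ × ℝ) :=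
  (List.range ((k-2)*(k-2))).map fun t => (q k (t / (k-2)), q k (t % (k-2)))
noncomputable def rowB (k : ℕ) : List (ℝ × ℝ) :=
  (List.range (k-2)).map fun i => (bx k i, C/2)
noncomputable def colL (k : ℕ) : List (ℝ × ℝ) :=
  (List.range (k-2)).map fun i => (C/2, bx k i)
noncomputable def rowT (k : ℕ) : List (ℝ × ℝ) :=
  (List.range (k-2)).map fun i => (LL k - bx k i, LL k - C/2)
noncomputable def colR (k : ℕ) : List (ℝ × ℝ) :=
  (List.range (k-2)).map fun i => (LL k - C/2, LL k - bx k i)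
noncomputable def segE (k : ℕ) : List (ℝ × ℝ) :=
  [((C+D)/2, (C+D)/2), (LL k - (C+D)/2, LL k - (C+D)/2)]
noncomputable def pts (k : ℕ) : List (ℝ × ℝ) :=
  gridL k ++ (rowB k ++ (colL k ++ (rowT k ++ (colR k ++ segE k))))

lemma pairwise_map_range {n : ℕ} {f : ℕ → ℝ × ℝ}
    (h : ∀ i j, i < j → j < n → good (f i) (f j)) :
    ((List.range n).map f).Pairwise good := by
  rw [List.pairwise_iff_getElem]
  intro i j hi hj hij
  simp only [List.length_map, List.length_range] at hi hj
  simp only [List.getElem_map, List.getElem_range]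
  exact h i j hij hj

lemma mem_gridL {p : ℝ × ℝ} (h : p ∈ gridL k) :
    ∃ i j, i ≤ k-3 ∧ j ≤ k-3 ∧ p = (q k i, q k j) := by
  unfold gridL at h
  simp only [List.mem_map, List.mem_range] at h
  obtain ⟨t, ht, rfl⟩ := h
  have h2 : 0 < k - 2 := by
    rcases Nat.eq_zero_or_pos (k-2) with h0 | h0
    · rw [h0] at ht; simp at ht
    · exact h0
  refine ⟨t / (k-2), t % (k-2), ?_, ?_, rfl⟩
  · have h3 : t / (k-2) < k-2 := Nat.div_lt_of_lt_mul ht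
    omega
  · have := Nat.mod_lt t h2
    omega

lemma mem_range_map {n : ℕ} {f : ℕ → ℝ × ℝ} {p : ℝ × ℝ}
    (h : p ∈ (List.range n).map f) : ∃ i, i < n ∧ p = f i := by
  simp only [List.mem_map, List.mem_range] at h
  obtain ⟨i, hi, rfl⟩ := h
  exact ⟨i, hi, rfl⟩

lemma gridL_pairwise (hk : 5 ≤ k) : (gridL k).Pairwise good := by
  unfold gridL
  apply pairwise_map_range
  intro s t hst ht
  have h2 : 0 < k - 2 := by omega
  have hs : s / (k-2) < k-2 := Nat.div_lt_of_lt_mul (lt_trans hst ht)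
  have ht' : t / (k-2) < k-2 := Nat.div_lt_of_lt_mul ht
  have hms := Nat.mod_lt s h2
  have hmt := Nat.mod_lt t h2
  by_cases hd : s / (k-2) = t / (k-2)
  · have hmm : s % (k-2) ≠ t % (k-2) := by
      intro hc
      have e1 := Nat.div_add_mod s (k-2)
      have e2 := Nat.div_add_mod t (k-2)
      rw [hd, hc] at e1
      omega
    exact good_of_y (q_sep hk hmm (by omega) (by omega))
  · exact good_of_x (q_sep hk hd (by omega) (by omega))

lemma seg_pairwise_x (hk : 5 ≤ k) :
    (rowB k).Pairwise good := by
  unfold rowB; apply pairwise_map_range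
  intro s t hst ht
  exact good_of_x (bx_sep hk (by omega) (by omega) (by omega))

lemma seg_pairwise_Lc (hk : 5 ≤ k) : (colL k).Pairwise good := by
  unfold colL; apply pairwise_map_range
  intro s t hst ht
  exact good_of_y (bx_sep hk (by omega) (by omega) (by omega))

lemma seg_pairwise_T (hk : 5 ≤ k) : (rowT k).Pairwise good := by
  unfold rowT; apply pairwise_map_range
  intro s t hst ht
  apply good_of_x
  rw [show LL k - bx k s - (LL k - bx k t) = -(bx k s - bx k t) by ring, abs_neg]
  exact bx_sep hk (by omega) (by omega) (by omega)

lemma seg_pairwise_R (hk : 5 ≤ k) : (colR k).Pairwise good := by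
  unfold colR; apply pairwise_map_range
  intro s t hst ht
  apply good_of_y
  rw [show LL k - bx k s - (LL k - bx k t) = -(bx k s - bx k t) by ring, abs_neg]
  exact bx_sep hk (by omega) (by omega) (by omega)

lemma segE_pairwise (hk : 5 ≤ k) : (segE k).Pairwise good := by
  unfold segE
  refine List.Pairwise.cons ?_ (List.pairwise_singleton _ _)
  intro r hr
  simp only [List.mem_singleton] at hr
  subst hr
  exact E1E2 hk

lemma pts_pairwise (hk : 5 ≤ k) : (pts k).Pairwise good := by
  unfold pts
  rw [List.pairwise_append, List.pairwise_append, List.pairwise_append,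
      List.pairwise_append, List.pairwise_append]
  refine ⟨gridL_pairwise hk, ⟨seg_pairwise_x hk, ⟨seg_pairwise_Lc hk,
    ⟨seg_pairwise_T hk, ⟨seg_pairwise_R hk, segE_pairwise hk, ?_⟩, ?_⟩, ?_⟩, ?_⟩, ?_⟩
  · -- colR vs segE
    intro p hp r hr
    obtain ⟨i, hi, rfl⟩ := mem_range_map hp
    unfold segE at hr
    simp only [List.mem_cons, List.mem_singleton, List.not_mem_nil, or_false] at hr
    rcases hr with rfl | rfl
    · exact RE1 hk (by omega)
    · exact RE2 hk (by omega)
  · -- rowT vs colR ++ segE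
    intro p hp r hr
    obtain ⟨i, hi, rfl⟩ := mem_range_map hp
    rw [List.mem_append] at hr
    rcases hr with hr | hr
    · obtain ⟨j, hj, rfl⟩ := mem_range_map hr
      exact TR hk (by omega) (by omega)
    · unfold segE at hr
      simp only [List.mem_cons, List.mem_singleton, List.not_mem_nil, or_false] at hr
      rcases hr with rfl | rfl
      · exact TE1 hk (by omega)
      · exact TE2 hk (by omega)
  · -- colL vs rowT ++ (colR ++ segE)
    intro p hp r hr
    obtain ⟨i, hi, rfl⟩ := mem_range_map hp
    rw [List.mem_append] at hr
    rcases hr with hr | hr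
    · obtain ⟨j, hj, rfl⟩ := mem_range_map hr
      exact LcT hk (by omega) (by omega)
    · rw [List.mem_append] at hr
      rcases hr with hr | hr
      · obtain ⟨j, hj, rfl⟩ := mem_range_map hr
        exact LcR hk (by omega) (by omega)
      · unfold segE at hr
        simp only [List.mem_cons, List.mem_singleton, List.not_mem_nil, or_false] at hr
        rcases hr with rfl | rfl
        · exact LcE1 hk (by omega)
        · exact LcE2 hk (by omega)
  · -- rowB vs colL ++ (rowT ++ (colR ++ segE))
    intro p hp r hr
    obtain ⟨i, hi, rfl⟩ := mem_range_map hp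
    rw [List.mem_append] at hr
    rcases hr with hr | hr
    · obtain ⟨j, hj, rfl⟩ := mem_range_map hr
      exact BLc hk (by omega) (by omega)
    · rw [List.mem_append] at hr
      rcases hr with hr | hr
      · obtain ⟨j, hj, rfl⟩ := mem_range_map hr
        exact BT hk (by omega) (by omega)
      · rw [List.mem_append] at hr
        rcases hr with hr | hr
        · obtain ⟨j, hj, rfl⟩ := mem_range_map hr
          exact BR hk (by omega) (by omega)
        · unfold segE at hr
          simp only [List.mem_cons, List.mem_singleton, List.not_mem_nil, or_false] at hr
          rcases hr with rfl | rfl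
          · exact BE1 hk (by omega)
          · exact BE2 hk (by omega)
  · -- gridL vs everything
    intro p hp r hr
    obtain ⟨i, j, hi, hj, rfl⟩ := mem_gridL hp
    rw [List.mem_append] at hr
    rcases hr with hr | hr
    · obtain ⟨u, hu, rfl⟩ := mem_range_map hr
      exact gB hk hi hj (by omega)
    · rw [List.mem_append] at hr
      rcases hr with hr | hr
      · obtain ⟨u, hu, rfl⟩ := mem_range_map hr
        exact gLc hk hi hj (by omega)
      · rw [List.mem_append] at hr
        rcases hr with hr | hr
        · obtain ⟨u, hu, rfl⟩ := mem_range_map hr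
          exact gT hk hi hj (by omega)
        · rw [List.mem_append] at hr
          rcases hr with hr | hr
          · obtain ⟨u, hu, rfl⟩ := mem_range_map hr
            exact gR hk hi hj (by omega)
          · unfold segE at hr
            simp only [List.mem_cons, List.mem_singleton, List.not_mem_nil, or_false] at hr
            rcases hr with rfl | rfl
            · exact gE1 hk hi hj
            · exact gE2 hk hi hj

lemma pts_bounds (hk : 5 ≤ k) {p : ℝ × ℝ} (hp : p ∈ pts k) :
    0 ≤ p.1 ∧ p.1 ≤ LL k ∧ 0 ≤ p.2 ∧ p.2 ≤ LL k := by
  have hLb := LL_big hk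
  have hmid : 0 ≤ C/2 ∧ C/2 ≤ LL k := ⟨C2pos, by linarith [hCub]⟩
  have hE : 0 ≤ (C+D)/2 ∧ (C+D)/2 ≤ LL k := by
    constructor
    · linarith [hC0, hD0]
    · linarith [hCub, hDub]
  unfold pts at hp
  rw [List.mem_append] at hp
  rcases hp with hp | hp
  · obtain ⟨i, j, hi, hj, rfl⟩ := mem_gridL hp
    exact ⟨q_nonneg hk i, q_le hk hi, q_nonneg hk j, q_le hk hj⟩
  · rw [List.mem_append] at hp
    have hbx : ∀ u : ℕ, u < k - 2 → 0 ≤ bx k u ∧ bx k u ≤ LL k := by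
      intro u hu
      constructor
      · linarith [bx_lb hk u, D2pos]
      · linarith [bx_ub hk (show u ≤ k - 3 by omega), D2pos]
    rcases hp with hp | hp
    · obtain ⟨u, hu, rfl⟩ := mem_range_map hp
      exact ⟨(hbx u hu).1, (hbx u hu).2, hmid.1, hmid.2⟩
    · rw [List.mem_append] at hp
      rcases hp with hp | hp
      · obtain ⟨u, hu, rfl⟩ := mem_range_map hp
        exact ⟨hmid.1, hmid.2, (hbx u hu).1, (hbx u hu).2⟩
      · rw [List.mem_append] at hp
        rcases hp with hp | hp
        · obtain ⟨u, hu, rfl⟩ := mem_range_map hp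
          exact ⟨by linarith [(hbx u hu).2], by linarith [(hbx u hu).1],
            by linarith [hmid.2], by linarith [hmid.1]⟩
        · rw [List.mem_append] at hp
          rcases hp with hp | hp
          · obtain ⟨u, hu, rfl⟩ := mem_range_map hp
            exact ⟨by linarith [hmid.2], by linarith [hmid.1],
              by linarith [(hbx u hu).2], by linarith [(hbx u hu).1]⟩
          · unfold segE at hp
            simp only [List.mem_cons, List.mem_singleton, List.not_mem_nil, or_false] at hp
            rcases hp with rfl | rfl
            · exact ⟨hE.1, hE.2, hE.1, hE.2⟩
            · exact ⟨by linarith [hE.2], by linarith [hE.1],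
                by linarith [hE.2], by linarith [hE.1]⟩

lemma pts_length (hk : 5 ≤ k) : (pts k).length = k^2 - 2 := by
  unfold pts gridL rowB colL rowT colR segE
  simp only [List.length_append, List.length_map, List.length_range, List.length_cons,
    List.length_nil]
  obtain ⟨b, rfl⟩ : ∃ b, k = b + 5 := ⟨k - 5, by omega⟩
  have e1 : b + 5 - 2 = b + 3 := by omega
  rw [e1]
  have e2 : (b+3)*(b+3) = b*b + 6*b + 9 := by ring
  have e3 : (b+5)^2 = b*b + 10*b + 25 := by ring
  rw [e2, e3]
  omega

lemma good_symm {p r : ℝ × ℝ} (h : good p r) : good r p := by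
  unfold good at *
  nlinarith [h]


theorem main (k : ℕ) (hk : 5 ≤ k) :
    ∃ f : Fin (k ^ 2 - 2) → EuclideanSpace ℝ (Fin 2),
      (∀ i t, f i t ∈ Set.Icc (0 : ℝ) 1) ∧
      ∀ i j, i ≠ j →
        1 / ((k : ℝ) - 5 + 2 * Real.sqrt (2 + Real.sqrt 3)) ≤ dist (f i) (f j) := by
  have hLL : ((k:ℝ) - 5 + 2 * Real.sqrt (2 + Real.sqrt 3)) = LL k := rfl
  have hLpos : (0:ℝ) < LL k := lt_of_lt_of_le (by norm_num) (LL_big hk)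
  have hlen : (pts k).length = k ^ 2 - 2 := pts_length hk
  set P : Fin (k^2-2) → ℝ × ℝ :=
    fun i => (pts k)[(i : ℕ)]'(by rw [hlen]; exact i.isLt) with hP
  have hmem : ∀ i : Fin (k^2-2), P i ∈ pts k := by
    intro i
    exact List.getElem_mem _
  refine ⟨fun i => (WithLp.equiv 2 (Fin 2 → ℝ)).symm ![(P i).1 / LL k, (P i).2 / LL k],
    ?_, ?_⟩
  · intro i t
    have hb := pts_bounds hk (hmem i)
    fin_cases t <;>
      simp only [WithLp.equiv_symm_apply, PiLp.toLp_apply, Matrix.cons_val_zero, Matrix.cons_val_one,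
        Matrix.head_cons, Set.mem_Icc] <;>
      constructor
    · exact div_nonneg hb.1 hLpos.le
    · exact (div_le_one hLpos).mpr hb.2.1
    · exact div_nonneg hb.2.2.1 hLpos.le
    · exact (div_le_one hLpos).mpr hb.2.2.2
  · intro i j hij
    have hgood : good (P i) (P j) := by
      have hpw := pts_pairwise hk
      rw [List.pairwise_iff_getElem] at hpw
      have hne : (i : ℕ) ≠ (j : ℕ) := fun hc => hij (Fin.ext hc)
      rcases Nat.lt_trichotomy (i : ℕ) (j : ℕ) with h | h | h
      · exact hpw _ _ _ _ h
      · exact absurd h hne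
      · exact good_symm (hpw _ _ _ _ h)
    have hg : 1 ≤ ((P i).1 - (P j).1)^2 + ((P i).2 - (P j).2)^2 := hgood
    rw [hLL, EuclideanSpace.dist_eq, Fin.sum_univ_two]
    simp only [WithLp.equiv_symm_apply, PiLp.toLp_apply, Matrix.cons_val_zero, Matrix.cons_val_one,
      Matrix.head_cons, Real.dist_eq, sq_abs]
    have e : ((P i).1 / LL k - (P j).1 / LL k)^2 + ((P i).2 / LL k - (P j).2 / LL k)^2
        = (((P i).1 - (P j).1)^2 + ((P i).2 - (P j).2)^2) / (LL k)^2 := by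
      field_simp
      try ring
    rw [e]
    have key : (1 / LL k)^2 ≤ (((P i).1 - (P j).1)^2 + ((P i).2 - (P j).2)^2) / (LL k)^2 := by
      rw [one_div, inv_pow, ← one_div]
      exact div_le_div_of_nonneg_right hg (by positivity) |>.trans_eq rfl
    calc 1 / LL k = Real.sqrt ((1 / LL k)^2) := (Real.sqrt_sq (by positivity)).symm
      _ ≤ _ := Real.sqrt_le_sqrt key

end St2

/-- For every integer `k ≥ 5` there exist `k² - 2` points in the closed unit square
whose pairwise distances are all at least `1 / (k - 5 + 2√(2 + √3))`. -/
theorem stmt_2 (k : ℕ) (hk : 5 ≤ k) :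
    ∃ f : Fin (k ^ 2 - 2) → EuclideanSpace ℝ (Fin 2),
      (∀ i t, f i t ∈ Set.Icc (0 : ℝ) 1) ∧
      ∀ i j, i ≠ j →
        1 / ((k : ℝ) - 5 + 2 * Real.sqrt (2 + Real.sqrt 3)) ≤ dist (f i) (f j) :=
  St2.main k hk
end

section
/- For every integer k ≥ 1, (k² − k + √(2k)) / (k² + 1) ≥ √3/2 if and only if k ≥ 4. -/
/-- For every integer `k ≥ 1`, `(k² - k + √(2k)) / (k² + 1) ≥ √3/2` iff `k ≥ 4`. -/
theorem stmt_5 (k : ℕ) (hk : 1 ≤ k) :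
    ((k : ℝ) ^ 2 - k + Real.sqrt (2 * k)) / ((k : ℝ) ^ 2 + 1) ≥ Real.sqrt 3 / 2 ↔
      4 ≤ k := by
  have s3 : Real.sqrt 3 ^ 2 = 3 := Real.sq_sqrt (by norm_num)
  have s3n : (0:ℝ) ≤ Real.sqrt 3 := Real.sqrt_nonneg 3
  have s3ub : Real.sqrt 3 ≤ 1.7321 := by nlinarith
  have s3lb : (1.732:ℝ) ≤ Real.sqrt 3 := by nlinarith
  constructor
  · intro h
    by_contra hlt
    push_neg at hlt
    interval_cases k
    · norm_num at h
      have s2 : Real.sqrt 2 ^ 2 = 2 := Real.sq_sqrt (by norm_num)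
      have s2n : (0:ℝ) ≤ Real.sqrt 2 := Real.sqrt_nonneg _
      nlinarith
    · norm_num at h
      have s4 : Real.sqrt 4 = 2 := by
        rw [show (4:ℝ) = 2^2 by norm_num, Real.sqrt_sq] <;> norm_num
      nlinarith
    · norm_num at h
      have s6 : Real.sqrt 6 ^ 2 = 6 := Real.sq_sqrt (by norm_num)
      have s6n : (0:ℝ) ≤ Real.sqrt 6 := Real.sqrt_nonneg _
      have s6ub : Real.sqrt 6 ≤ 2.45 := by nlinarith [sq_nonneg (Real.sqrt 6 - 2.45)]
      nlinarith
  · intro h4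
    have hkr : (4:ℝ) ≤ (k:ℝ) := by exact_mod_cast h4
    have t8 : Real.sqrt 8 ≤ Real.sqrt (2*k) := by
      apply Real.sqrt_le_sqrt; nlinarith
    have t8sq : Real.sqrt 8 ^ 2 = 8 := Real.sq_sqrt (by norm_num)
    have t8n : (0:ℝ) ≤ Real.sqrt 8 := Real.sqrt_nonneg 8
    have t8lb : (2.8284:ℝ) ≤ Real.sqrt 8 := by nlinarith
    have hden : (0:ℝ) < (k:ℝ)^2 + 1 := by positivity
    rw [ge_iff_le, div_le_div_iff₀ (by norm_num) hden]
    nlinarith [sq_nonneg ((k:ℝ) - 4), sq_nonneg ((k:ℝ) - 5),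
      mul_nonneg (sub_nonneg.2 hkr) (sub_nonneg.2 hkr)]
end

section
/- For every integer k ≥ 4 there exist k(k+1) points in the closed unit square [0,1]² whose pairwise distances are all at least (k² + 1) / (k·(k² − k + √(2k))). -/
lemma aux_ineq (c s m : ℝ) (hm : 0 ≤ m) (hcs : c^2 + s^2 = 1)
    (hc : 1/2 ≤ c) (hs0 : 0 ≤ s) (hs : s ≤ 1/2)
    (dj di ε : ℤ)
    (h0 : dj = 0 → ε = 0 ∧ di ≠ 0)
    (h1 : dj = 1 ∨ dj = -1 → ε = 1 ∨ ε = -1) :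
    m^2 ≤ ((dj : ℝ)*(m*c))^2 + ((di:ℝ)*m + (ε:ℝ)*(s*m))^2 := by
  have key : m^2*c^2 + m^2*s^2 = m^2 := by linear_combination m^2 * hcs
  by_cases hdj : dj = 0
  · obtain ⟨hε, hdi⟩ := h0 hdj
    subst hdj hε
    have h1' : 1 ≤ di ∨ di ≤ -1 := by omega
    have hd : (1:ℝ) ≤ (di:ℝ)^2 := by
      rcases h1' with h | h
      · have : (1:ℝ) ≤ (di:ℝ) := by exact_mod_cast h
        nlinarith
      · have : (di:ℝ) ≤ -1 := by exact_mod_cast h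
        nlinarith
    push_cast
    nlinarith [sq_nonneg ((di:ℝ)*m), sq_nonneg m]
  · by_cases hdj1 : dj = 1 ∨ dj = -1
    · have hdj2 : ((dj:ℝ)*(m*c))^2 = m^2*c^2 := by
        rcases hdj1 with h | h <;> subst h <;> push_cast <;> ring
      set e : ℝ := (ε:ℝ) with he_def
      have he2 : e^2 = 1 := by
        rcases h1 hdj1 with h | h <;> simp [he_def, h]
      have hsm : 2*(s*m) ≤ m := by nlinarith
      have hsm0 : 0 ≤ s*m := mul_nonneg hs0 hm
      have hprod : 0 ≤ ((di:ℝ)*m) * ((di:ℝ)*m + 2*e*(s*m)) := by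
        rcases lt_trichotomy di 0 with hd | hd | hd
        · have hd1 : (di:ℝ) ≤ -1 := by exact_mod_cast (by omega : di ≤ -1)
          have ha : (di:ℝ)*m ≤ 0 := by nlinarith
          have hb : (di:ℝ)*m + 2*e*(s*m) ≤ 0 := by
            rcases h1 hdj1 with h | h <;> simp only [he_def, h] <;> push_cast <;> nlinarith
          nlinarith [mul_nonneg (neg_nonneg.2 ha) (neg_nonneg.2 hb)]
        · subst hd; push_cast; ring_nf; positivity
        · have hd1 : (1:ℝ) ≤ (di:ℝ) := by exact_mod_cast (by omega : 1 ≤ di)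
          have ha : 0 ≤ (di:ℝ)*m := by nlinarith
          have hb : 0 ≤ (di:ℝ)*m + 2*e*(s*m) := by
            rcases h1 hdj1 with h | h <;> simp only [he_def, h] <;> push_cast <;> nlinarith
          exact mul_nonneg ha hb
      have hexp : ((di:ℝ)*m + e*(s*m))^2
          = ((di:ℝ)*m) * ((di:ℝ)*m + 2*e*(s*m)) + e^2*(s*m)^2 := by ring
      rw [hdj2, hexp, he2]
      nlinarith [hprod]
    · have h2 : 2 ≤ dj ∨ dj ≤ -2 := by omega
      have hd : (4:ℝ) ≤ (dj:ℝ)^2 := by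
        rcases h2 with h | h
        · have : (2:ℝ) ≤ (dj:ℝ) := by exact_mod_cast h
          nlinarith
        · have : (dj:ℝ) ≤ -2 := by exact_mod_cast h
          nlinarith
      have hc2 : 1/4 ≤ c^2 := by nlinarith
      have hstep : m^2 ≤ 4*(m*c)^2 := by nlinarith [sq_nonneg m]
      have hstep2 : 4*(m*c)^2 ≤ (dj:ℝ)^2*(m*c)^2 := by nlinarith [sq_nonneg (m*c)]
      have : ((dj:ℝ)*(m*c))^2 = (dj:ℝ)^2*(m*c)^2 := by ring
      nlinarith [sq_nonneg ((di:ℝ)*m + (ε:ℝ)*(s*m))]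

/-- For every integer `k ≥ 4` there exist `k(k+1)` points in the closed unit square
whose pairwise distances are all at least `(k² + 1) / (k (k² - k + √(2k)))`. -/
theorem stmt_6 (k : ℕ) (hk : 4 ≤ k) :
    ∃ f : Fin (k * (k + 1)) → EuclideanSpace ℝ (Fin 2),
      (∀ i t, f i t ∈ Set.Icc (0 : ℝ) 1) ∧
      ∀ i j, i ≠ j →
        ((k : ℝ) ^ 2 + 1) / ((k : ℝ) * ((k : ℝ) ^ 2 - k + Real.sqrt (2 * k))) ≤
          dist (f i) (f j) := by
  have hk0 : 0 < k := by omega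
  have hK4 : (4:ℝ) ≤ (k:ℝ) := by exact_mod_cast hk
  set K : ℝ := (k:ℝ) with hKdef
  have hK0 : 0 < K := by linarith
  set r : ℝ := Real.sqrt (2*K) with hrdef
  have hr0 : 0 ≤ r := Real.sqrt_nonneg _
  have hr2 : r^2 = 2*K := Real.sq_sqrt (by positivity)
  have hrge2 : 2 ≤ r := by nlinarith
  have hden : 0 < K^2 - K + r := by nlinarith
  have hden2 : 0 < K^2 + 1 := by positivity
  set c : ℝ := (K^2 - K + r)/(K^2+1) with hcdef
  set s : ℝ := (K*r - K + 1)/(K^2+1) with hsdef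
  set m : ℝ := (K^2+1)/(K*(K^2-K+r)) with hmdef
  have hm0 : 0 < m := by positivity
  have hcs : c^2 + s^2 = 1 := by
    rw [hcdef, hsdef]; field_simp; linear_combination (K^2+1) * hr2
  have hc : 1/2 ≤ c := by
    rw [hcdef, le_div_iff₀ hden2]; nlinarith
  have hs0 : 0 ≤ s := by
    rw [hsdef]; apply div_nonneg _ hden2.le; nlinarith
  have hs12 : s ≤ 1/2 := by
    rw [hsdef, div_le_iff₀ hden2]
    have ht0 : (0:ℝ) < K^2 + 2*K - 1 := by nlinarith
    have ht : 8*K^3 ≤ (K^2+2*K-1)^2 := by nlinarith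
    nlinarith [sq_nonneg (2*K*r - (K^2+2*K-1))]
  have hkc : K*c = K - 1 + s := by
    rw [hcdef, hsdef]; field_simp; ring
  have hmc : m * c = 1/K := by
    rw [hmdef, hcdef, div_mul_div_comm, div_eq_div_iff (mul_pos (mul_pos hK0 hden) hden2).ne' hK0.ne']; ring
  have hmkc : m * (K*c) = 1 := by
    rw [hmdef, hcdef]; field_simp
    exact div_self (show (0:ℝ) < K*(K-1)+r by nlinarith).ne'
  set X : Fin (k*(k+1)) → ℝ := fun n => ((n.val / k : ℕ) : ℝ) / K with hXdef
  set Y : Fin (k*(k+1)) → ℝ := fun n =>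
    ((n.val % k : ℕ) : ℝ) * m + (if (n.val / k) % 2 = 1 then s*m else 0) with hYdef
  refine ⟨fun n => (WithLp.equiv 2 (Fin 2 → ℝ)).symm ![X n, Y n], ?_, ?_⟩
  · intro n t
    have hj : n.val / k ≤ k := by
      have h1 : n.val < (k+1) * k := lt_of_lt_of_le n.isLt (Nat.mul_comm k (k+1)).le
      have := (Nat.div_lt_iff_lt_mul hk0).mpr h1
      omega
    have hi : n.val % k + 1 ≤ k := Nat.mod_lt _ hk0
    have hjR : ((n.val / k : ℕ) : ℝ) ≤ K := by
      rw [hKdef]; exact_mod_cast hj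
    have hiR : ((n.val % k : ℕ) : ℝ) ≤ K - 1 := by
      have : ((n.val % k : ℕ) : ℝ) + 1 ≤ K := by rw [hKdef]; exact_mod_cast hi
      linarith
    have hX : X n ∈ Set.Icc (0:ℝ) 1 := by
      rw [hXdef]
      constructor
      · apply div_nonneg _ hK0.le; positivity
      · rw [div_le_one hK0]; exact hjR
    have hY : Y n ∈ Set.Icc (0:ℝ) 1 := by
      rw [hYdef]
      constructor
      · apply add_nonneg
        · positivity
        · split <;> positivity
      · have h2 : ((n.val % k : ℕ) : ℝ) * m + (if (n.val / k) % 2 = 1 then s*m else 0)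
            ≤ (K-1)*m + s*m := by
          apply add_le_add
          · exact mul_le_mul_of_nonneg_right hiR hm0.le
          · split
            · exact le_rfl
            · positivity
        calc ((n.val % k : ℕ) : ℝ) * m + (if (n.val / k) % 2 = 1 then s*m else 0)
            ≤ (K-1)*m + s*m := h2
          _ = m * (K*c) := by rw [hkc]; ring
          _ = 1 := hmkc
    fin_cases t
    · exact hX
    · exact hY
  · intro a b hab
    have hab' : (a.val : ℕ) ≠ b.val := fun h => hab (Fin.ext h)
    have e1 := Nat.div_add_mod a.val k
    have e2 := Nat.div_add_mod b.val k
    have hiak : a.val % k < k := Nat.mod_lt _ hk0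
    have hibk : b.val % k < k := Nat.mod_lt _ hk0
    set ja := a.val / k with hja
    set ia := a.val % k with hia
    set jb := b.val / k with hjb
    set ib := b.val % k with hib
    show m ≤ dist ((WithLp.equiv 2 (Fin 2 → ℝ)).symm ![X a, Y a])
        ((WithLp.equiv 2 (Fin 2 → ℝ)).symm ![X b, Y b])
    have hdist : dist ((WithLp.equiv 2 (Fin 2 → ℝ)).symm ![X a, Y a])
        ((WithLp.equiv 2 (Fin 2 → ℝ)).symm ![X b, Y b])
        = Real.sqrt ((X a - X b)^2 + (Y a - Y b)^2) := by
      rw [EuclideanSpace.dist_eq, Fin.sum_univ_two]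
      simp only [WithLp.equiv_symm_apply, WithLp.ofLp_toLp, Matrix.cons_val_zero, Matrix.cons_val_one,
        Matrix.head_cons, Real.dist_eq, sq_abs]
    rw [hdist]
    rw [show m = Real.sqrt (m^2) from (Real.sqrt_sq hm0.le).symm]
    apply Real.sqrt_le_sqrt
    have hXX : X a - X b = (((ja:ℤ) - (jb:ℤ) : ℤ) : ℝ) * (m*c) := by
      simp only [hXdef, hmc]
      rw [← hja, ← hjb]
      push_cast
      ring
    have hYY : Y a - Y b = (((ia:ℤ) - (ib:ℤ) : ℤ) : ℝ) * m
        + ((((if ja % 2 = 1 then (1:ℤ) else 0)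
            - (if jb % 2 = 1 then (1:ℤ) else 0)) : ℤ) : ℝ) * (s*m) := by
      simp only [hYdef]
      rw [← hja, ← hjb, ← hia, ← hib]
      by_cases h1 : ja % 2 = 1 <;> by_cases h2' : jb % 2 = 1
      · simp only [if_pos h1, if_pos h2']; push_cast; ring
      · simp only [if_pos h1, if_neg h2']; push_cast; ring
      · simp only [if_neg h1, if_pos h2']; push_cast; ring
      · simp only [if_neg h1, if_neg h2']; push_cast; ring
    rw [hXX, hYY]
    apply aux_ineq c s m hm0.le hcs hc hs0 hs12
    · intro h
      have hjj : ja = jb := by omega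
      refine ⟨by rw [hjj]; ring, ?_⟩
      have hii : ia ≠ ib := by
        intro h'
        apply hab'
        rw [← e1, ← e2, hjj, h']
      omega
    · intro h
      have hp : ja % 2 ≠ jb % 2 := by omega
      by_cases h1 : ja % 2 = 1 <;> by_cases h2' : jb % 2 = 1
      · exact absurd (h1.trans h2'.symm) hp
      · rw [if_pos h1, if_neg h2']; left; ring
      · rw [if_neg h1, if_pos h2']; right; ring
      · exact absurd (by omega : ja % 2 = jb % 2) hp
end

section
/- For every integer k ≥ 4 there exist k(k+1) points in the closed unit square [0,1]² whose pairwise distances are all at least 1/((k + 1/2)·cos β(k) + (√3/2)·sin β(k)), where β(k) ∈ (0, π/2) is the unique angle with tan β(k) = (2k + 1 − √3·(k − 1))/(k + 1 + √3). -/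
section helpers

private lemma rbounds (r : ℝ) (hr2 : r^2 = 3) (hr0 : 0 ≤ r) :
    1.732050 ≤ r ∧ r ≤ 1.732051 := by
  constructor <;> nlinarith [sq_nonneg (r - 1.732050), sq_nonneg (r - 1.732051)]

private lemma intkey (d e u : ℤ) (hpar : 2 ∣ (u - e)) (he : e = 0 ∨ e = 1 ∨ e = -1)
    (h0 : u = 0 → e = 0 ∧ d ≠ 0) : 4 ≤ (2*d+e)^2 + 3*u^2 := by
  have hcase : u = 0 ∨ u = 1 ∨ u = -1 ∨ 2 ≤ u ∨ u ≤ -2 := by omega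
  rcases hcase with hu | hu | hu | hu | hu
  · obtain ⟨he0, hd⟩ := h0 hu
    subst hu; subst he0
    have : d ≤ -1 ∨ 1 ≤ d := by omega
    rcases this with h | h <;> nlinarith
  · have he' : e = 1 ∨ e = -1 := by rcases he with h|h|h <;> omega
    have : 2*d+e ≤ -1 ∨ 1 ≤ 2*d+e := by omega
    rcases this with h | h <;> nlinarith
  · have he' : e = 1 ∨ e = -1 := by rcases he with h|h|h <;> omega
    have : 2*d+e ≤ -1 ∨ 1 ≤ 2*d+e := by omega
    rcases this with h | h <;> nlinarith
  · nlinarith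
  · nlinarith

private lemma keyP1 (r K : ℝ) (hr2 : r^2 = 3) (hr0 : 0 ≤ r) (hK : 4 ≤ K) :
    3*(K+1)^2*((K+1+r)^2+(2*K+1-r*(K-1))^2)
      ≤ ((2*K+1)*(K+1+r)+r*(2*K+1-r*(K-1)))^2 := by
  obtain ⟨hlb, hub⟩ := rbounds r hr2 hr0
  have e1 : ((2*K+1)*(K+1+r)+r*(2*K+1-r*(K-1)))^2
      - 3*(K+1)^2*((K+1+r)^2+(2*K+1-r*(K-1))^2)
      = 4 + 4*r - 4*K*r + 16*K^2 - 16*K^2*r - 48*K^3 + 28*K^3*r - 20*K^4 + 12*K^4*r := by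
    linear_combination (3 + 4*r + r^2 + (8 + 4*r - 2*r^2)*K + (20 - 8*r + r^2)*K^2
      - 4*K^3 - 3*K^4) * hr2
  have hx : (0:ℝ) ≤ K - 4 := by linarith
  have hr' : (0:ℝ) ≤ r - 1.732050 := by linarith
  have key : 0 ≤ 4 + 4*r - 4*K*r + 16*K^2 - 16*K^2*r - 48*K^3 + 28*K^3*r - 20*K^4 + 12*K^4*r := by
    nlinarith [mul_nonneg hr' hx, mul_nonneg hr' (mul_nonneg hx hx),
      mul_nonneg hr' (mul_nonneg hx (mul_nonneg hx hx)),
      mul_nonneg hr' (mul_nonneg (mul_nonneg hx hx) (mul_nonneg hx hx)),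
      mul_nonneg hx hx, mul_nonneg hx (mul_nonneg hx hx),
      mul_nonneg (mul_nonneg hx hx) (mul_nonneg hx hx), hx, hr']
  linarith

private lemma keyP2 (r K : ℝ) (hr2 : r^2 = 3) (hr0 : 0 ≤ r) (hK : 4 ≤ K) (hK' : K ≤ 21) :
    (2*K-1)^2*((K+1+r)^2+(2*K+1-r*(K-1))^2)
      ≤ ((2*K+1)*(K+1+r)+r*(2*K+1-r*(K-1)))^2 := by
  obtain ⟨hlb, hub⟩ := rbounds r hr2 hr0
  have e1 : ((2*K+1)*(K+1+r)+r*(2*K+1-r*(K-1)))^2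
      - (2*K-1)^2*((K+1+r)^2+(2*K+1-r*(K-1))^2)
      = 20 + 12*r + 80*K + 44*K*r + 24*K^2 + 12*K^2*r + 32*K^3 - 16*K^3*r - 28*K^4 + 16*K^4*r := by
    linear_combination (7 + 4*r + r^2 + (24 + 4*r - 2*r^2)*K + (-8*r + r^2)*K^2
      + 8*K^3 - 4*K^4) * hr2
  have hx : (0:ℝ) ≤ K - 4 := by linarith
  have hy : (0:ℝ) ≤ 21 - K := by linarith
  have hr1 : (0:ℝ) ≤ r - 1.732050 := by linarith
  have hr2' : (0:ℝ) ≤ 1.732051 - r := by linarith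
  have key : 0 ≤ 20 + 12*r + 80*K + 44*K*r + 24*K^2 + 12*K^2*r + 32*K^3 - 16*K^3*r - 28*K^4 + 16*K^4*r := by
    nlinarith [hr1, mul_nonneg hr1 hx,
      mul_nonneg hx hy, mul_nonneg (mul_nonneg hx hx) hy,
      mul_nonneg (mul_nonneg hx (mul_nonneg hx hx)) hy,
      mul_nonneg hr2' (mul_nonneg hx hy),
      mul_nonneg hr2' (mul_nonneg (mul_nonneg hx hx) hy),
      mul_nonneg hr2' (mul_nonneg (mul_nonneg hx (mul_nonneg hx hx)) hy), hx]
  linarith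

private lemma keyP3 (r K : ℝ) (hr2 : r^2 = 3) (hr0 : 0 ≤ r) (hK : 22 ≤ K) :
    4*((24*K+8)/25)^2*((K+1+r)^2+(2*K+1-r*(K-1))^2)
      ≤ ((2*K+1)*(K+1+r)+r*(2*K+1-r*(K-1)))^2 := by
  obtain ⟨hlb, hub⟩ := rbounds r hr2 hr0
  have e1 : ((2*K+1)*(K+1+r)+r*(2*K+1-r*(K-1)))^2
      - 4*((24*K+8)/25)^2*((K+1+r)^2+(2*K+1-r*(K-1))^2)
      = 15452/625 + (8976/625)*r + (17712/625)*K + (12832/625)*K*r + (3904/125)*K^2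
        - (9336/625)*K^2*r - (12288/625)*K^3 + (6928/625)*K^3*r
        - (15932/625)*K^4 + (9216/625)*K^4*r := by
    linear_combination (5113/625 + 4*r + r^2 + (1238/125 + 4*r - 2*r^2)*K
      + (8833/625 - 8*r + r^2)*K^2 + (572/625)*K^3 - (2304/625)*K^4) * hr2
  have hx : (0:ℝ) ≤ K - 22 := by linarith
  have hr1 : (0:ℝ) ≤ r - 1.732050 := by linarith
  have key : 0 ≤ 15452/625 + (8976/625)*r + (17712/625)*K + (12832/625)*K*r + (3904/125)*K^2
        - (9336/625)*K^2*r - (12288/625)*K^3 + (6928/625)*K^3*r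
        - (15932/625)*K^4 + (9216/625)*K^4*r := by
    nlinarith [mul_nonneg hr1 hx, mul_nonneg hr1 (mul_nonneg hx hx),
      mul_nonneg hr1 (mul_nonneg hx (mul_nonneg hx hx)),
      mul_nonneg hr1 (mul_nonneg (mul_nonneg hx hx) (mul_nonneg hx hx)),
      mul_nonneg hx hx, mul_nonneg hx (mul_nonneg hx hx),
      mul_nonneg (mul_nonneg hx hx) (mul_nonneg hx hx), hx, hr1]
  linarith

private lemma keyP4 (r K : ℝ) (hr2 : r^2 = 3) (hr0 : 0 ≤ r) (hK : 22 ≤ K) :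
    r*(K^2+K) ≤ 2*((24*K+8)/25)^2 - r*((24*K+8)/25) := by
  obtain ⟨hlb, hub⟩ := rbounds r hr2 hr0
  have hx : (0:ℝ) ≤ K - 22 := by linarith
  have hr2' : (0:ℝ) ≤ 1.732051 - r := by linarith
  nlinarith [mul_nonneg hr2' hx, mul_nonneg hr2' (mul_nonneg hx hx),
    mul_nonneg hx hx, hx, hr2']

set_option maxHeartbeats 1000000 in
private lemma D_ge (r K c s G : ℝ) (hr0 : 0 ≤ r) (hr2 : r^2 = 3) (hK : 4 ≤ K)
    (hc : 0 < c) (hpy : s^2 + c^2 = 1)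
    (hcross : s * (K+1+r) = (2*K+1-r*(K-1)) * c)
    (hG : 0 ≤ G)
    (hpoly : 4*G^2*((K+1+r)^2+(2*K+1-r*(K-1))^2)
      ≤ ((2*K+1)*(K+1+r)+r*(2*K+1-r*(K-1)))^2) :
    G ≤ (K + 1/2) * c + r / 2 * s := by
  have hub : r ≤ 1.732051 := by nlinarith [sq_nonneg (r - 1.732051)]
  have hA : (0:ℝ) < K+1+r := by linarith
  have hB : (0:ℝ) < 2*K+1-r*(K-1) := by nlinarith
  have hC : (0:ℝ) < (2*K+1)*(K+1+r)+r*(2*K+1-r*(K-1)) := by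
    have h1 : (0:ℝ) < (2*K+1)*(K+1+r) := by nlinarith
    nlinarith [mul_nonneg hr0 hB.le]
  set D := (K + 1/2) * c + r / 2 * s with hD
  have h1 : 2*D*(K+1+r) = c*((2*K+1)*(K+1+r)+r*(2*K+1-r*(K-1))) := by
    rw [hD]; linear_combination r * hcross
  have h2 : c^2*((K+1+r)^2+(2*K+1-r*(K-1))^2) = (K+1+r)^2 := by
    linear_combination (K+1+r)^2 * hpy
      - (c*(2*K+1-r*(K-1)) + s*(K+1+r)) * hcross
  have hDpos : 0 < D := by
    have := mul_pos hc hC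
    nlinarith
  have h1sq : (2*D*(K+1+r))^2 = (c*((2*K+1)*(K+1+r)+r*(2*K+1-r*(K-1))))^2 := by rw [h1]
  have e : 4*D^2*(K+1+r)^2*((K+1+r)^2+(2*K+1-r*(K-1))^2)
      = ((2*K+1)*(K+1+r)+r*(2*K+1-r*(K-1)))^2 * (K+1+r)^2 := by
    linear_combination ((K+1+r)^2+(2*K+1-r*(K-1))^2) * h1sq
      + ((2*K+1)*(K+1+r)+r*(2*K+1-r*(K-1)))^2 * h2
  have hpos : (0:ℝ) < ((K+1+r)^2+(2*K+1-r*(K-1))^2)*(K+1+r)^2 := by positivity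
  have hmul2 : (4*G^2) * (((K+1+r)^2+(2*K+1-r*(K-1))^2)*(K+1+r)^2)
      ≤ (4*D^2) * (((K+1+r)^2+(2*K+1-r*(K-1))^2)*(K+1+r)^2) := by
    calc (4*G^2) * (((K+1+r)^2+(2*K+1-r*(K-1))^2)*(K+1+r)^2)
        = (4*G^2*((K+1+r)^2+(2*K+1-r*(K-1))^2))*(K+1+r)^2 := by ring
      _ ≤ ((2*K+1)*(K+1+r)+r*(2*K+1-r*(K-1)))^2*(K+1+r)^2 :=
          mul_le_mul_of_nonneg_right hpoly (by positivity)
      _ = (4*D^2) * (((K+1+r)^2+(2*K+1-r*(K-1))^2)*(K+1+r)^2) := by linear_combination -e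
  have hfin : 4*G^2 ≤ 4*D^2 := le_of_mul_le_mul_right hmul2 hpos
  nlinarith [hfin, hDpos, hG]

end helpers

set_option maxHeartbeats 3200000 in
/-- For every integer `k ≥ 4` there exist `k(k+1)` points in the closed unit square
whose pairwise distances are all at least
`1 / ((k + 1/2) cos β(k) + (√3/2) sin β(k))`, where `β(k) ∈ (0, π/2)` is the unique
angle with `tan β(k) = (2k + 1 - √3 (k - 1)) / (k + 1 + √3)`. -/
theorem stmt_8 (k : ℕ) (hk : 4 ≤ k) (β : ℝ) (hβ : β ∈ Set.Ioo 0 (Real.pi / 2))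
    (htan : Real.tan β =
      (2 * (k : ℝ) + 1 - Real.sqrt 3 * ((k : ℝ) - 1)) / ((k : ℝ) + 1 + Real.sqrt 3)) :
    ∃ f : Fin (k * (k + 1)) → EuclideanSpace ℝ (Fin 2),
      (∀ i t, f i t ∈ Set.Icc (0 : ℝ) 1) ∧
      ∀ i j, i ≠ j →
        1 / (((k : ℝ) + 1 / 2) * Real.cos β + Real.sqrt 3 / 2 * Real.sin β) ≤
          dist (f i) (f j) := by
  obtain ⟨hβ0, hβπ⟩ := hβ
  have hπ := Real.pi_pos
  set r : ℝ := Real.sqrt 3 with hrdef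
  have hr0 : (0:ℝ) ≤ r := Real.sqrt_nonneg 3
  have hr2 : r^2 = 3 := Real.sq_sqrt (by norm_num)
  obtain ⟨hrlb, hrub⟩ := rbounds r hr2 hr0
  have hrpos : (0:ℝ) < r := by linarith
  set K : ℝ := (k : ℝ) with hKdef
  have hK : (4:ℝ) ≤ K := by rw [hKdef]; exact_mod_cast hk
  set c : ℝ := Real.cos β with hcdef
  set s : ℝ := Real.sin β with hsdef
  have hc : 0 < c := Real.cos_pos_of_mem_Ioo ⟨by linarith, hβπ⟩
  have hs : 0 < s := Real.sin_pos_of_pos_of_lt_pi hβ0 (by linarith)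
  have hpy : s^2 + c^2 = 1 := Real.sin_sq_add_cos_sq β
  have hA : (0:ℝ) < K + 1 + r := by linarith
  have hc' : c ≠ 0 := ne_of_gt hc
  have hA' : K + 1 + r ≠ 0 := ne_of_gt hA
  have hcross : s * (K+1+r) = (2*K+1-r*(K-1)) * c := by
    have h1 : s / c = (2*K+1 - r*(K-1)) / (K+1+r) := by
      rw [hsdef, hcdef, ← Real.tan_eq_sin_div_cos, htan]
    field_simp at h1
    linear_combination h1
  set D : ℝ := (K + 1/2) * c + r / 2 * s with hDdef
  clear_value r K c s
  clear_value D
  -- lower bound I1 : r(K+1)/2 ≤ D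
  have hI1 : r*(K+1)/2 ≤ D := by
    rw [hDdef]
    apply D_ge r K c s _ hr0 hr2 hK hc hpy hcross (by positivity)
    calc 4*(r*(K+1)/2)^2*((K+1+r)^2+(2*K+1-r*(K-1))^2)
        = r^2*((K+1)^2*((K+1+r)^2+(2*K+1-r*(K-1))^2)) := by ring
      _ = 3*(K+1)^2*((K+1+r)^2+(2*K+1-r*(K-1))^2) := by rw [hr2]; ring
      _ ≤ _ := keyP1 r K hr2 hr0 hK
  have hDpos : (0:ℝ) < D := lt_of_lt_of_le (by positivity) hI1
  set p : ℕ := ⌊D + 1/2⌋₊ with hpdef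
  set R : ℕ := ⌊2*D/r⌋₊ + 1 with hRdef
  clear_value p R
  have hp_le : (p:ℝ) ≤ D + 1/2 := by rw [hpdef]; exact Nat.floor_le (by positivity)
  have hp_gt : D - 1/2 < (p:ℝ) := by
    have := Nat.lt_floor_add_one (D + 1/2); rw [hpdef]; linarith
  have hfloor_le : ((⌊2*D/r⌋₊ : ℕ):ℝ) ≤ 2*D/r := Nat.floor_le (by positivity)
  have hR_gt : 2*D/r < (R:ℝ) := by
    rw [hRdef]; push_cast; exact Nat.lt_floor_add_one _
  have hR_cast : (R:ℝ) = (⌊2*D/r⌋₊ : ℝ) + 1 := by rw [hRdef]; push_cast; ring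
  have hRk : k + 2 ≤ R := by
    rw [hRdef]
    have h0 : (K+1)*r ≤ 2*D := by nlinarith [hI1]
    have h1 : (k:ℝ) + 1 ≤ 2*D/r := by
      rw [le_div_iff₀ hrpos, ← hKdef]; exact h0
    have h2 : k + 1 ≤ ⌊2*D/r⌋₊ := Nat.le_floor (by push_cast; linarith)
    omega
  have hD4 : (4:ℝ) ≤ D := by
    nlinarith [mul_le_mul_of_nonneg_right hrlb (show (0:ℝ) ≤ K+1 by linarith)]
  have hppos : 0 < p := by
    have h1 : (1:ℕ) ≤ p := by
      rw [hpdef]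
      exact Nat.le_floor (by push_cast; linarith)
    omega
  -- counting
  have hcount : k * (k+1) ≤ p * R := by
    rcases le_or_gt k 21 with hk21 | hk21
    · have hK21 : K ≤ 21 := by rw [hKdef]; exact_mod_cast hk21
      have hpk : k ≤ p := by
        rw [hpdef]
        apply Nat.le_floor
        have hq : (2*K-1)/2 ≤ D := by
          rw [hDdef]
          apply D_ge r K c s _ hr0 hr2 hK hc hpy hcross (by linarith)
          calc 4*((2*K-1)/2)^2*((K+1+r)^2+(2*K+1-r*(K-1))^2)
              = (2*K-1)^2*((K+1+r)^2+(2*K+1-r*(K-1))^2) := by ring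
            _ ≤ _ := keyP2 r K hr2 hr0 hK hK21
        push_cast
        rw [← hKdef]
        linarith
      calc k * (k+1) ≤ k * (k+2) := Nat.mul_le_mul_left k (by omega)
        _ ≤ p * R := Nat.mul_le_mul hpk hRk
    · have hK22 : (22:ℝ) ≤ K := by rw [hKdef]; exact_mod_cast hk21
      have hDL : (24*K+8)/25 ≤ D := by
        rw [hDdef]
        exact D_ge r K c s _ hr0 hr2 hK hc hpy hcross (by linarith)
          (keyP3 r K hr2 hr0 hK22)
      have hstep : r*(K^2+K) ≤ 2*D^2 - D := by
        have h4 := keyP4 r K hr2 hr0 hK22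
        nlinarith [hDL, hDpos, hrub, hrlb]
      have hreal : (K^2+K) ≤ ((p:ℝ)) * ((R:ℝ)) := by
        have heq : (D - 1/2) * (2*D/r) = (2*D^2 - D)/r := by
          field_simp
        have hs1 : (K^2+K) ≤ (D - 1/2) * (2*D/r) := by
          rw [heq, le_div_iff₀ hrpos]
          nlinarith [hstep]
        have hs2 : (D - 1/2) * (2*D/r) ≤ (p:ℝ) * (R:ℝ) := by
          apply mul_le_mul (le_of_lt hp_gt) (le_of_lt hR_gt) (by positivity) (by positivity)
        linarith
      have hfin : ((k*(k+1) : ℕ) : ℝ) ≤ ((p*R : ℕ) : ℝ) := by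
        push_cast
        rw [← hKdef]
        nlinarith [hreal]
      exact_mod_cast hfin
  -- the triangular-lattice configuration
  have hD2pos : (0:ℝ) < 2*D := by linarith
  refine ⟨fun n => WithLp.toLp 2 ![ ((↑(n.val % p) : ℝ) + (↑(n.val / p % 2) : ℝ)/2) / D,
                      (↑(n.val / p) : ℝ) * r / (2*D) ], ?_, ?_⟩
  · intro i t
    have hrow : i.val / p < R := by
      rw [Nat.div_lt_iff_lt_mul hppos]
      calc i.val < k*(k+1) := i.isLt
        _ ≤ p*R := hcount
        _ = R*p := Nat.mul_comm _ _
    have hrow' : (↑(i.val/p) : ℝ) ≤ (R:ℝ) - 1 := by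
      have h1 : i.val/p + 1 ≤ R := hrow
      have h2 : ((i.val/p : ℕ):ℝ) + 1 ≤ (R:ℝ) := by exact_mod_cast h1
      linarith
    have hcol : i.val % p < p := Nat.mod_lt _ hppos
    have hpar : i.val / p % 2 ≤ 1 := by omega
    fin_cases t
    · simp only [PiLp.toLp_apply, Fin.mk_zero, Matrix.cons_val_zero, Set.mem_Icc]
      refine ⟨by positivity, ?_⟩
      rw [div_le_one hDpos]
      have h1 : (↑(i.val % p):ℝ) + 1 ≤ (p:ℝ) := by exact_mod_cast hcol
      have h2 : (↑(i.val / p % 2):ℝ) ≤ 1 := by exact_mod_cast hpar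
      linarith
    · simp only [PiLp.toLp_apply, Fin.mk_one, Matrix.cons_val_one, Matrix.head_cons, Matrix.cons_val_zero, Set.mem_Icc]
      refine ⟨by positivity, ?_⟩
      rw [div_le_one hD2pos]
      have h3 : (↑(i.val/p):ℝ) ≤ 2*D/r := by
        rw [hR_cast] at hrow'
        linarith [hfloor_le]
      calc (↑(i.val/p):ℝ) * r ≤ (2*D/r)*r := mul_le_mul_of_nonneg_right h3 hr0
        _ = 2*D := div_mul_cancel₀ _ (ne_of_gt hrpos)
  · intro i j hij
    have hne : i.val ≠ j.val := fun h => hij (Fin.ext h)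
    have hdm1 : p*(i.val/p) + i.val%p = i.val := Nat.div_add_mod _ _
    have hdm2 : p*(j.val/p) + j.val%p = j.val := Nat.div_add_mod _ _
    set d : ℤ := ((i.val % p : ℕ) : ℤ) - ((j.val % p : ℕ) : ℤ) with hd
    set e : ℤ := ((i.val / p % 2 : ℕ) : ℤ) - ((j.val / p % 2 : ℕ) : ℤ) with he'
    set u : ℤ := ((i.val / p : ℕ) : ℤ) - ((j.val / p : ℕ) : ℤ) with hu
    have hpar2 : 2 ∣ (u - e) := by omega
    have hee : e = 0 ∨ e = 1 ∨ e = -1 := by omega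
    have h00 : u = 0 → e = 0 ∧ d ≠ 0 := by
      intro hu0
      have hdiv : i.val / p = j.val / p := by omega
      refine ⟨by omega, ?_⟩
      intro hd0
      have hmod : i.val % p = j.val % p := by omega
      exact hne (by rw [← hdm1, ← hdm2, hdiv, hmod])
    have hkeyZ := intkey d e u hpar2 hee h00
    have hkey : (4:ℝ) ≤ (2*(d:ℝ)+(e:ℝ))^2 + 3*((u:ℝ))^2 := by exact_mod_cast hkeyZ
    rw [EuclideanSpace.dist_eq, Fin.sum_univ_two]
    simp only [PiLp.toLp_apply, Matrix.cons_val_zero, Matrix.cons_val_one, Matrix.head_cons,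
      Real.dist_eq, sq_abs]
    have hX : ((↑(i.val % p) : ℝ) + (↑(i.val / p % 2) : ℝ)/2) / D
        - ((↑(j.val % p) : ℝ) + (↑(j.val / p % 2) : ℝ)/2) / D
        = ((d:ℝ) + (e:ℝ)/2)/D := by
      simp only [hd, he', Int.cast_sub, Int.cast_natCast]; ring
    have hY : (↑(i.val / p) : ℝ) * r / (2*D) - (↑(j.val / p) : ℝ) * r / (2*D)
        = (u:ℝ)*r/(2*D) := by
      simp only [hu, Int.cast_sub, Int.cast_natCast]; ring
    rw [hX, hY]
    have e2 : (((d:ℝ)+(e:ℝ)/2)/D)^2 + ((u:ℝ)*r/(2*D))^2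
        = ((2*(d:ℝ)+(e:ℝ))^2 + r^2*(u:ℝ)^2)/(4*D^2) := by
      field_simp
      ring
    rw [e2]
    have hN : 4 ≤ (2*(d:ℝ)+(e:ℝ))^2 + r^2*(u:ℝ)^2 := by rw [hr2]; linarith
    have e3 : (1/D)^2 = 4/(4*D^2) := by
      field_simp
    calc 1/D = Real.sqrt ((1/D)^2) := (Real.sqrt_sq (by positivity)).symm
      _ ≤ Real.sqrt (((2*(d:ℝ)+(e:ℝ))^2 + r^2*(u:ℝ)^2)/(4*D^2)) := by
          apply Real.sqrt_le_sqrt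
          rw [e3]
          gcongr
end

section
/- For every integer k with 4 ≤ k ≤ 7, (k + 1/2)·cos β(k) + (√3/2)·sin β(k) > k·(k² − k + √(2k))/(k² + 1), where β(k) ∈ (0, π/2) is the unique angle with tan β(k) = (2k + 1 − √3·(k − 1))/(k + 1 + √3). Equivalently, the alternative-pattern diameter m̄(k) is strictly smaller than the main-pattern diameter m(k) for n = 20, 30, 42, and 56 disks. -/
lemma cos_lb (x c u : ℝ) (hc0 : 0 ≤ c) (hx : 0 < Real.cos x)
    (ht0 : 0 ≤ Real.tan x) (htu : Real.tan x < u) (hu : 0 < u)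
    (hb : c ^ 2 * (1 + u ^ 2) < 1) : c < Real.cos x := by
  have hxne : Real.cos x ≠ 0 := ne_of_gt hx
  have h1 : Real.cos x ^ 2 * (1 + Real.tan x ^ 2) = 1 := by
    have hp := Real.sin_sq_add_cos_sq x
    rw [Real.tan_eq_sin_div_cos]
    field_simp
    linarith
  have htt : Real.tan x * Real.tan x < u * u := mul_self_lt_mul_self ht0 htu
  have h2 : c ^ 2 < Real.cos x ^ 2 := by nlinarith [mul_pos hx hx]
  nlinarith

set_option maxHeartbeats 2000000 in
/-- For every integer `k` with `4 ≤ k ≤ 7`,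
`(k + 1/2) cos β(k) + (√3/2) sin β(k) > k (k² - k + √(2k)) / (k² + 1)`, where
`β(k) ∈ (0, π/2)` is the unique angle with
`tan β(k) = (2k + 1 - √3 (k - 1)) / (k + 1 + √3)`. -/
theorem stmt_10 (k : ℕ) (hk : 4 ≤ k) (hk' : k ≤ 7) (β : ℝ)
    (hβ : β ∈ Set.Ioo 0 (Real.pi / 2))
    (htan : Real.tan β =
      (2 * (k : ℝ) + 1 - Real.sqrt 3 * ((k : ℝ) - 1)) / ((k : ℝ) + 1 + Real.sqrt 3)) :
    ((k : ℝ) + 1 / 2) * Real.cos β + Real.sqrt 3 / 2 * Real.sin β >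
      (k : ℝ) * ((k : ℝ) ^ 2 - k + Real.sqrt (2 * k)) / ((k : ℝ) ^ 2 + 1) := by
  obtain ⟨hβ0, hβ2⟩ := hβ
  have hpi := Real.pi_pos
  have hc : 0 < Real.cos β :=
    Real.cos_pos_of_mem_Ioo ⟨by linarith, hβ2⟩
  have hs : 0 < Real.sin β :=
    Real.sin_pos_of_pos_of_lt_pi hβ0 (by linarith)
  have hsc : Real.sin β = Real.tan β * Real.cos β := by
    rw [Real.tan_eq_sin_div_cos]; field_simp
  have hs3 : Real.sqrt 3 ^ 2 = 3 := Real.sq_sqrt (by norm_num)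
  have hs3l : (1.732:ℝ) < Real.sqrt 3 := by
    nlinarith [Real.sqrt_nonneg 3]
  have hs3u : Real.sqrt 3 < (1.7321:ℝ) := by
    nlinarith [Real.sqrt_nonneg 3]
  interval_cases k <;> push_cast at htan ⊢
  · -- k = 4
    have htl : (0.565:ℝ) < Real.tan β := by
      rw [htan, lt_div_iff₀ (by positivity)]; nlinarith
    have htu : Real.tan β < (0.5651:ℝ) := by
      rw [htan, div_lt_iff₀ (by positivity)]; nlinarith
    have hcl : (0.8706:ℝ) < Real.cos β :=
      cos_lb β 0.8706 0.5651 (by norm_num) hc (by linarith) htu (by norm_num) (by norm_num)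
    have hslb : (0.4918:ℝ) < Real.sin β := by
      nlinarith [hsc, htl, hcl]
    have hq : Real.sqrt (2 * (4:ℝ)) < 2.8285 := by
      rw [show Real.sqrt (2 * (4:ℝ)) = Real.sqrt (2 * 4) from rfl, Real.sqrt_lt' (by norm_num)]
      norm_num
    rw [gt_iff_lt, div_lt_iff₀ (by positivity)]
    nlinarith [hq, hs3l, hcl, hslb, hs]
  · -- k = 5
    have htl : (0.5265:ℝ) < Real.tan β := by
      rw [htan, lt_div_iff₀ (by positivity)]; nlinarith
    have htu : Real.tan β < (0.5267:ℝ) := by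
      rw [htan, div_lt_iff₀ (by positivity)]; nlinarith
    have hcl : (0.8847:ℝ) < Real.cos β :=
      cos_lb β 0.8847 0.5267 (by norm_num) hc (by linarith) htu (by norm_num) (by norm_num)
    have hslb : (0.4657:ℝ) < Real.sin β := by
      nlinarith [hsc, htl, hcl]
    have hq : Real.sqrt (2 * (5:ℝ)) < 3.1623 := by
      rw [show Real.sqrt (2 * (5:ℝ)) = Real.sqrt (2 * 5) from rfl, Real.sqrt_lt' (by norm_num)]
      norm_num
    rw [gt_iff_lt, div_lt_iff₀ (by positivity)]
    nlinarith [hq, hs3l, hcl, hslb, hs]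
  · -- k = 6
    have htl : (0.4969:ℝ) < Real.tan β := by
      rw [htan, lt_div_iff₀ (by positivity)]; nlinarith
    have htu : Real.tan β < (0.4971:ℝ) := by
      rw [htan, div_lt_iff₀ (by positivity)]; nlinarith
    have hcl : (0.8954:ℝ) < Real.cos β :=
      cos_lb β 0.8954 0.4971 (by norm_num) hc (by linarith) htu (by norm_num) (by norm_num)
    have hslb : (0.4449:ℝ) < Real.sin β := by
      nlinarith [hsc, htl, hcl]
    have hq : Real.sqrt (2 * (6:ℝ)) < 3.4642 := by
      rw [show Real.sqrt (2 * (6:ℝ)) = Real.sqrt (2 * 6) from rfl, Real.sqrt_lt' (by norm_num)]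
      norm_num
    rw [gt_iff_lt, div_lt_iff₀ (by positivity)]
    nlinarith [hq, hs3l, hcl, hslb, hs]
  · -- k = 7
    have htl : (0.4734:ℝ) < Real.tan β := by
      rw [htan, lt_div_iff₀ (by positivity)]; nlinarith
    have htu : Real.tan β < (0.4735:ℝ) := by
      rw [htan, div_lt_iff₀ (by positivity)]; nlinarith
    have hcl : (0.9038:ℝ) < Real.cos β :=
      cos_lb β 0.9038 0.4735 (by norm_num) hc (by linarith) htu (by norm_num) (by norm_num)
    have hslb : (0.4278:ℝ) < Real.sin β := by
      nlinarith [hsc, htl, hcl]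
    have hq : Real.sqrt (2 * (7:ℝ)) < 3.7417 := by
      rw [show Real.sqrt (2 * (7:ℝ)) = Real.sqrt (2 * 7) from rfl, Real.sqrt_lt' (by norm_num)]
      norm_num
    rw [gt_iff_lt, div_lt_iff₀ (by positivity)]
    nlinarith [hq, hs3l, hcl, hslb, hs]
end

section
/- For every integer k with 2 ≤ k ≤ 7 there exist k² + ⌊k/2⌋ points in the closed unit square [0,1]² whose pairwise distances are all at least √(5k² − 8k + 4)/(2k(k − 1)). -/
/-- Scaled integer points for the alternating-column packing. -/
def pack_pts (k : ℕ) : List (ℤ × ℤ) :=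
  (List.range (k+1)).flatMap (fun j =>
    if j % 2 = 0 then (List.range k).map (fun r => ((2*(k-1)*j : ℤ), (2*k*r : ℤ)))
    else (List.range (k-1)).map (fun r => ((2*(k-1)*j : ℤ), ((2*r+1)*k : ℤ))))

theorem pack_helper (A L : ℕ) (hL : 0 < L) (l : List (ℤ × ℤ)) (n : ℕ) (hn : n = l.length)
    (h1 : ∀ p ∈ l, 0 ≤ p.1 ∧ p.1 ≤ (L : ℤ) ∧ 0 ≤ p.2 ∧ p.2 ≤ (L : ℤ))
    (h2 : l.Pairwise (fun p q => (A : ℤ) ≤ (p.1 - q.1)^2 + (p.2 - q.2)^2)) :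
    ∃ f : Fin n → EuclideanSpace ℝ (Fin 2),
      (∀ i t, f i t ∈ Set.Icc (0 : ℝ) 1) ∧
      ∀ i j, i ≠ j → Real.sqrt A / L ≤ dist (f i) (f j) := by
  have hL' : (0:ℝ) < L := by exact_mod_cast hL
  set g : Fin n → ℤ × ℤ := fun i => l.get (Fin.cast hn i) with hg
  refine ⟨fun i => (show EuclideanSpace ℝ (Fin 2) from
      WithLp.toLp 2 ![((g i).1 : ℝ)/L, ((g i).2 : ℝ)/L]), ?_, ?_⟩
  · intro i t
    have hp := h1 (g i) (List.get_mem l _)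
    fin_cases t
    · exact ⟨div_nonneg (by exact_mod_cast hp.1) hL'.le,
        div_le_one_of_le₀ (by exact_mod_cast hp.2.1) hL'.le⟩
    · exact ⟨div_nonneg (by exact_mod_cast hp.2.2.1) hL'.le,
        div_le_one_of_le₀ (by exact_mod_cast hp.2.2.2) hL'.le⟩
  · intro i j hij
    have key : (A : ℝ) ≤ (((g i).1 : ℝ) - (g j).1)^2 + (((g i).2 : ℝ) - (g j).2)^2 := by
      have hsym : ∀ a b : Fin n, a < b →
          (A : ℤ) ≤ ((g a).1 - (g b).1)^2 + ((g a).2 - (g b).2)^2 := by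
        intro a b hab
        exact (List.pairwise_iff_get.mp h2) (Fin.cast hn a) (Fin.cast hn b) hab
      rcases lt_or_gt_of_ne hij with h | h
      · exact_mod_cast hsym i j h
      · have h' : (A : ℝ) ≤ (((g j).1 : ℝ) - (g i).1)^2 + (((g j).2 : ℝ) - (g i).2)^2 := by
          exact_mod_cast hsym j i h
        nlinarith [h']
    rw [EuclideanSpace.dist_eq, Fin.sum_univ_two]
    simp only [PiLp.toLp_apply, Matrix.cons_val_zero, Matrix.cons_val_one, Matrix.head_cons, Real.dist_eq, sq_abs]
    rw [div_sub_div_same, div_sub_div_same, div_pow, div_pow, ← add_div,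
      show ((L:ℝ))^2 = L*L by ring]
    calc Real.sqrt A / L = Real.sqrt ((A : ℝ) / (L*L)) := by
          rw [Real.sqrt_div (by positivity), Real.sqrt_mul_self hL'.le]
      _ ≤ _ := Real.sqrt_le_sqrt ((div_le_div_iff_of_pos_right (by positivity)).mpr key)

/-- For every integer `k` with `2 ≤ k ≤ 7` there exist `k² + ⌊k/2⌋` points in the
closed unit square whose pairwise distances are all at least
`√(5k² - 8k + 4)/(2k(k-1))`. -/
theorem stmt_14 (k : ℕ) (hk : 2 ≤ k) (hk' : k ≤ 7) :
    ∃ f : Fin (k ^ 2 + k / 2) → EuclideanSpace ℝ (Fin 2),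
      (∀ i t, f i t ∈ Set.Icc (0 : ℝ) 1) ∧
      ∀ i j, i ≠ j →
        Real.sqrt (5 * (k : ℝ) ^ 2 - 8 * k + 4) / (2 * k * ((k : ℝ) - 1)) ≤
          dist (f i) (f j) := by
  interval_cases k
  · obtain ⟨f, hf1, hf2⟩ := pack_helper 8 4 (by norm_num) (pack_pts 2) (2^2+2/2)
      (by decide) (by decide) (by decide)
    exact ⟨f, hf1, fun i j hij => le_trans (le_of_eq (by norm_num)) (hf2 i j hij)⟩
  · obtain ⟨f, hf1, hf2⟩ := pack_helper 25 12 (by norm_num) (pack_pts 3) (3^2+3/2)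
      (by decide) (by decide) (by decide)
    exact ⟨f, hf1, fun i j hij => le_trans (le_of_eq (by norm_num)) (hf2 i j hij)⟩
  · obtain ⟨f, hf1, hf2⟩ := pack_helper 52 24 (by norm_num) (pack_pts 4) (4^2+4/2)
      (by decide) (by decide) (by decide)
    exact ⟨f, hf1, fun i j hij => le_trans (le_of_eq (by norm_num)) (hf2 i j hij)⟩
  · obtain ⟨f, hf1, hf2⟩ := pack_helper 89 40 (by norm_num) (pack_pts 5) (5^2+5/2)
      (by decide) (by decide) (by decide)
    exact ⟨f, hf1, fun i j hij => le_trans (le_of_eq (by norm_num)) (hf2 i j hij)⟩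
  · obtain ⟨f, hf1, hf2⟩ := pack_helper 136 60 (by norm_num) (pack_pts 6) (6^2+6/2)
      (by decide) (by decide) (by decide)
    exact ⟨f, hf1, fun i j hij => le_trans (le_of_eq (by norm_num)) (hf2 i j hij)⟩
  · obtain ⟨f, hf1, hf2⟩ := pack_helper 193 84 (by norm_num) (pack_pts 7) (7^2+7/2)
      (by decide) (by decide) (by decide)
    exact ⟨f, hf1, fun i j hij => le_trans (le_of_eq (by norm_num)) (hf2 i j hij)⟩
end
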